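/- Assume (G,K,θ) is a multiplicity-free triple. For every spherical function φ, the subspace U_φ = span{λ_G(g)φ : g ∈ G} of L(G) is an irreducible G-subrepresentation, and I(G,K,ψ) decomposes as the orthogonal direct sum I(G,K,ψ) = ⊕_{φ} U_φ over all spherical functions φ; this is the decomposition of I(G,K,ψ) into irreducible subrepresentations. In particular, the number of spherical functions equals the number of pairwise inequivalent irreducible G-representations contained in Ind_K^G θ. -/

import Mathlib

open scoped BigOperators ComplexConjugate Classical

set_option linter.unusedSectionVars false
set_option synthInstance.maxHeartbeats 1000000
set_option maxHeartbeats 1000000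

noncomputable section

namespace MFT

variable {G : Type} [Group G] [Fintype G]
variable {V : Type} [NormedAddCommGroup V] [InnerProductSpace ℂ V] [FiniteDimensional ℂ V]

/-- Left translation of functions on `G`: `(translate h f) g = f (h⁻¹ * g)`.
This is the left regular action of `G`. -/
def translate {A : Type} (h : G) (f : G → A) : G → A := fun g => f (h⁻¹ * g)

/-- A representation by linear automorphisms is unitary if it preserves the inner product. -/
def IsUnitaryRep {H W : Type} [Group H] [NormedAddCommGroup W] [InnerProductSpace ℂ W]
    (ρ : H →* (W ≃ₗ[ℂ] W)) : Prop :=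
  ∀ (h : H) (x y : W), (inner ℂ (ρ h x) (ρ h y) : ℂ) = (inner ℂ x y : ℂ)

/-- Irreducibility of a representation: the space is nonzero and has no proper nonzero
invariant subspace. -/
def IsIrreducibleRep {H W : Type} [Group H] [AddCommGroup W] [Module ℂ W]
    (ρ : H →* (W ≃ₗ[ℂ] W)) : Prop :=
  (⊥ : Submodule ℂ W) ≠ ⊤ ∧
    ∀ p : Submodule ℂ W, (∀ (h : H) (x : W), x ∈ p → ρ h x ∈ p) → p = ⊥ ∨ p = ⊤

variable (K : Subgroup G) (θ : ↥K →* (V ≃ₗ[ℂ] V))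

/-- The space `Ind_K^G V` of the representation induced by `θ`:
functions `f : G → V` with `f (g k) = θ k⁻¹ (f g)`. -/
def ind : Submodule ℂ (G → V) where
  carrier := {f | ∀ (g : G) (k : K), f (g * (k : G)) = θ k⁻¹ (f g)}
  add_mem' := by
    intro f₁ f₂ h₁ h₂ g k
    simp only [Pi.add_apply, h₁ g k, h₂ g k, map_add]
  zero_mem' := by intro g k; simp
  smul_mem' := by
    intro c f hf g k
    simp only [Pi.smul_apply, hf g k, map_smul]

theorem translate_mem_ind {f : G → V} (hf : f ∈ ind K θ) (h : G) : translate h f ∈ ind K θ := by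
  intro g k
  simpa [translate, mul_assoc] using hf (h⁻¹ * g) k

/-- The left regular action of `G` on the induced space, `λ(h) f = f (h⁻¹ ·)`. -/
def lamL (h : G) : ↥(ind K θ) →ₗ[ℂ] ↥(ind K θ) where
  toFun f := ⟨translate h ↑f, translate_mem_ind K θ f.2 h⟩
  map_add' f₁ f₂ := by apply Subtype.ext; funext g; simp [translate]
  map_smul' c f := by apply Subtype.ext; funext g; simp [translate]

instance : AddCommGroup (↥(ind K θ) →ₗ[ℂ] ↥(ind K θ)) := LinearMap.addCommGroup

instance : Module ℂ (↥(ind K θ) →ₗ[ℂ] ↥(ind K θ)) := LinearMap.module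

/-- The Hecke algebra condition: `F (k₁ g k₂) = θ k₂⁻¹ ∘ F g ∘ θ k₁⁻¹`. -/
def IsHecke (F : G → (V →ₗ[ℂ] V)) : Prop :=
  ∀ (g : G) (k₁ k₂ : K),
    F ((k₁ : G) * g * (k₂ : G)) = (θ k₂⁻¹).toLinearMap ∘ₗ F g ∘ₗ (θ k₁⁻¹).toLinearMap

/-- Convolution on the Hecke algebra: `(F₁ * F₂) g = ∑ h, F₁ (h⁻¹ g) ∘ F₂ h`. -/
def heckeConv (F₁ F₂ : G → (V →ₗ[ℂ] V)) : G → (V →ₗ[ℂ] V) :=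
  fun g => ∑ h : G, F₁ (h⁻¹ * g) ∘ₗ F₂ h

/-- Involution on the Hecke algebra: `F* g = (F g⁻¹)*`. -/
def heckeStar (F : G → (V →ₗ[ℂ] V)) : G → (V →ₗ[ℂ] V) :=
  fun g => LinearMap.adjoint (F g⁻¹)

/-- The inner product on the Hecke algebra:
`⟨F₁, F₂⟩ = ∑ g, (dim V)⁻¹ tr (F₂(g)* ∘ F₁(g))`. -/
def heckeInner (F₁ F₂ : G → (V →ₗ[ℂ] V)) : ℂ :=
  ∑ g : G, (Module.finrank ℂ V : ℂ)⁻¹ *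
    LinearMap.trace ℂ V (LinearMap.adjoint (F₂ g) ∘ₗ F₁ g)

/-- `(ξ F) f g = ∑ h, F (h⁻¹ g) (f h)`. -/
def xiFun (F : G → (V →ₗ[ℂ] V)) (f : G → V) : G → V := fun g => ∑ h : G, F (h⁻¹ * g) (f h)

/-- `ξ F` as a linear endomorphism of `G → V`. -/
def xiL (F : G → (V →ₗ[ℂ] V)) : (G → V) →ₗ[ℂ] (G → V) where
  toFun := xiFun F
  map_add' f₁ f₂ := by funext g; simp [xiFun, Finset.sum_add_distrib]
  map_smul' c f := by funext g; simp [xiFun, Finset.smul_sum]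

/-- The paper's inner product on the induced space:
`⟨f₁, f₂⟩ = |K|⁻¹ ∑ g, ⟨f₁ g, f₂ g⟩_V` (conjugate-linear in the second variable). -/
def innerInd (f₁ f₂ : G → V) : ℂ := (Nat.card K : ℂ)⁻¹ * ∑ g : G, (inner ℂ (f₂ g) (f₁ g) : ℂ)

/-- Convolution of complex valued functions on `G`. -/
def convC (f₁ f₂ : G → ℂ) : G → ℂ := fun g => ∑ h : G, f₁ h * f₂ (h⁻¹ * g)

/-- The involution `f* g = conj (f g⁻¹)` on `L(G)`. -/
def starC (f : G → ℂ) : G → ℂ := fun g => conj (f g⁻¹)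

/-- The paper's inner product on `L(G)`: `⟨f₁, f₂⟩ = ∑ g, f₁ g • conj (f₂ g)`. -/
def innerC (f₁ f₂ : G → ℂ) : ℂ := ∑ g : G, f₁ g * conj (f₂ g)

/-- The function `ψ (k) = (d_θ/|K|) ⟨v, θ k v⟩` on `K`, extended by `0` on `G \ K`. -/
def psi (v : V) : G → ℂ := fun g =>
  if h : g ∈ K then ((Module.finrank ℂ V : ℂ) / (Nat.card K : ℂ)) * (inner ℂ (θ ⟨g, h⟩ v) v : ℂ)
  else 0

/-- `(T_v f) g = √(d_θ/|K|) ⟨f g, v⟩`. -/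
def Tv (v : V) (f : G → V) : G → ℂ := fun g =>
  (Real.sqrt ((Module.finrank ℂ V : ℝ) / (Nat.card K : ℝ)) : ℂ) * (inner ℂ v (f g) : ℂ)

/-- The Hecke algebra `H(G,K,ψ) = {f : f = ψ * f * ψ}` as a set. -/
def HSet (v : V) : Set (G → ℂ) := {f | convC (convC (psi K θ v) f) (psi K θ v) = f}

/-- `(S_v F) g = d_θ ⟨F g v, v⟩`. -/
def Sv (v : V) (F : G → (V →ₗ[ℂ] V)) : G → ℂ :=
  fun g => (Module.finrank ℂ V : ℂ) * (inner ℂ v (F g v) : ℂ)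

/-- A spherical function: an element of `H(G,K,ψ)` taking value `1` at the identity which
is an eigenvector of all convolution operators coming from `H(G,K,ψ)`. -/
def IsSpherical (v : V) (φ : G → ℂ) : Prop :=
  φ ∈ HSet K θ v ∧ φ 1 = 1 ∧ ∀ f ∈ HSet K θ v, ∃ c : ℂ, convC φ f = c • φ

/-- The intertwining space `Hom_{K_s}(Res^K_{K_s} θ, θ^s)` where `K_s = K ∩ s K s⁻¹`
and `θ^s (x) = θ (s⁻¹ x s)`. -/
def interSpace (s : G) : Submodule ℂ (V →ₗ[ℂ] V) where
  carrier := {T | ∀ (x : G) (hx : x ∈ K) (hx' : s⁻¹ * x * s ∈ K),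
      T ∘ₗ (θ ⟨x, hx⟩).toLinearMap = (θ ⟨s⁻¹ * x * s, hx'⟩).toLinearMap ∘ₗ T}
  add_mem' := by
    intro a b ha hb x hx hx'
    simp only [LinearMap.add_comp, LinearMap.comp_add, ha x hx hx', hb x hx hx']
  zero_mem' := by
    intro x hx hx'
    simp
  smul_mem' := by
    intro c a ha x hx hx'
    simp only [LinearMap.smul_comp, LinearMap.comp_smul, ha x hx hx']

/-- `S` is a complete set of representatives of the double cosets `K\G/K`. -/
def IsDoubleCosetReps (S : Finset G) : Prop :=
  ∀ g : G, ∃! s : G, s ∈ S ∧ ∃ k₁ k₂ : K, g = (k₁ : G) * s * (k₂ : G)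

/-- The commutant `End_G(Ind_K^G V)`. -/
def commutant : Submodule ℂ (↥(ind K θ) →ₗ[ℂ] ↥(ind K θ)) where
  carrier := {T | ∀ (h : G) (f : ↥(ind K θ)), T (lamL K θ h f) = lamL K θ h (T f)}
  add_mem' := by
    intro a b ha hb h f
    simp [ha h f, hb h f]
  zero_mem' := by intro h f; simp
  smul_mem' := by
    intro c a ha h f
    simp [ha h f]

/-- The space `Hom_G(W, Ind_K^G V)` of `G`-equivariant linear maps from `(σ, W)` to the
induced representation. -/
def homGInd {W : Type} [AddCommGroup W] [Module ℂ W] (σ : G →* (W ≃ₗ[ℂ] W)) :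
    Submodule ℂ (W →ₗ[ℂ] (G → V)) where
  carrier := {A | (∀ w : W, A w ∈ ind K θ) ∧ ∀ (g : G) (w : W), A (σ g w) = translate g (A w)}
  add_mem' := by
    rintro A B ⟨hA₁, hA₂⟩ ⟨hB₁, hB₂⟩
    refine ⟨fun w => (ind K θ).add_mem (hA₁ w) (hB₁ w), fun g w => ?_⟩
    funext x
    simp [translate, hA₂ g w, hB₂ g w, Pi.add_apply]
  zero_mem' := by
    refine ⟨fun w => (ind K θ).zero_mem, fun g w => ?_⟩
    funext x
    simp [translate]
  smul_mem' := by
    rintro c A ⟨hA₁, hA₂⟩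
    refine ⟨fun w => (ind K θ).smul_mem c (hA₁ w), fun g w => ?_⟩
    funext x
    simp [translate, hA₂ g w]

/-- `Ind_K^G θ` is multiplicity-free: every irreducible representation of `G` occurs with
multiplicity at most `1`. -/
def IsMultFree : Prop :=
  ∀ (W : Type) [AddCommGroup W] [Module ℂ W] [FiniteDimensional ℂ W]
    (σ : G →* (W ≃ₗ[ℂ] W)), IsIrreducibleRep σ → Module.finrank ℂ ↥(homGInd K θ σ) ≤ 1

theorem convC_add_left (f₁ f₂ g : G → ℂ) : convC (f₁ + f₂) g = convC f₁ g + convC f₂ g := by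
  funext x
  simp [convC, add_mul, Finset.sum_add_distrib]

theorem convC_add_right (f g₁ g₂ : G → ℂ) : convC f (g₁ + g₂) = convC f g₁ + convC f g₂ := by
  funext x
  simp [convC, mul_add, Finset.sum_add_distrib]

theorem convC_smul_left (c : ℂ) (f g : G → ℂ) : convC (c • f) g = c • convC f g := by
  funext x
  simp [convC, Finset.mul_sum, mul_assoc]

theorem convC_smul_right (c : ℂ) (f g : G → ℂ) : convC f (c • g) = c • convC f g := by
  funext x
  simp [convC, Finset.mul_sum, mul_left_comm]

theorem convC_zero_left (g : G → ℂ) : convC 0 g = 0 := by funext x; simp [convC]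

theorem convC_zero_right (f : G → ℂ) : convC f 0 = 0 := by funext x; simp [convC]

/-- The Hecke algebra `H(G,K,ψ)` as a subspace of `L(G)`. -/
def heckeSub (v : V) : Submodule ℂ (G → ℂ) where
  carrier := HSet K θ v
  add_mem' := by
    intro a b ha hb
    have ha' : convC (convC (psi K θ v) a) (psi K θ v) = a := ha
    have hb' : convC (convC (psi K θ v) b) (psi K θ v) = b := hb
    show convC (convC (psi K θ v) (a + b)) (psi K θ v) = a + b
    rw [convC_add_right, convC_add_left, ha', hb']
  zero_mem' := by
    show convC (convC (psi K θ v) 0) (psi K θ v) = 0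
    rw [convC_zero_right, convC_zero_left]
  smul_mem' := by
    intro c a ha
    have ha' : convC (convC (psi K θ v) a) (psi K θ v) = a := ha
    show convC (convC (psi K θ v) (c • a)) (psi K θ v) = c • a
    rw [convC_smul_right, convC_smul_left, ha']

/-- The subspace `I(G,K,ψ) = {f ∈ L(G) : f * ψ = f}`. -/
def ISub (v : V) : Submodule ℂ (G → ℂ) where
  carrier := {φ | convC φ (psi K θ v) = φ}
  add_mem' := by
    intro a b ha hb
    have ha' : convC a (psi K θ v) = a := ha
    have hb' : convC b (psi K θ v) = b := hb
    show convC (a + b) (psi K θ v) = a + b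
    rw [convC_add_left, ha', hb']
  zero_mem' := by
    show convC 0 (psi K θ v) = 0
    rw [convC_zero_left]
  smul_mem' := by
    intro c a ha
    have ha' : convC a (psi K θ v) = a := ha
    show convC (c • a) (psi K θ v) = c • a
    rw [convC_smul_left, ha']

/-- The subspace of `L(G)` spanned by the left translates of `φ`. -/
def sphSpan (φ : G → ℂ) : Submodule ℂ (G → ℂ) :=
  Submodule.span ℂ (Set.range fun g : G => translate g φ)

/-- A submodule of functions on `G` invariant under all left translations. -/
def IsInvariantSub {A : Type} [AddCommGroup A] [Module ℂ A] (p : Submodule ℂ (G → A)) : Prop :=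
  ∀ h : G, ∀ f ∈ p, translate h f ∈ p

/-- `p` is an irreducible `G`-invariant subspace of the induced representation. -/
def IsIrredSubOfInd (p : Submodule ℂ (G → V)) : Prop :=
  p ≤ ind K θ ∧ IsInvariantSub p ∧ p ≠ ⊥ ∧
    ∀ q : Submodule ℂ (G → V), q ≤ p → IsInvariantSub q → q = ⊥ ∨ q = p

section Dev

variable (K : Subgroup G) (θ : ↥K →* (V ≃ₗ[ℂ] V)) (v : V)

theorem translate_apply' {A : Type} (h : G) (f : G → A) (g : G) :
    translate h f g = f (h⁻¹ * g) := rfl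

theorem translate_translate {A : Type} (h h' : G) (f : G → A) :
    translate h (translate h' f) = translate (h * h') f := by
  funext g; simp [translate, mul_assoc]

theorem translate_one' {A : Type} (f : G → A) : translate (1 : G) f = f := by
  funext g; simp [translate]

theorem convC_assoc (a b c : G → ℂ) : convC (convC a b) c = convC a (convC b c) := by
  funext g
  simp only [convC, Finset.sum_mul, Finset.mul_sum]
  rw [Finset.sum_comm]
  refine Finset.sum_congr rfl fun x _ => ?_
  refine (Fintype.sum_bijective (fun y => x * y) (Group.mulLeft_bijective x) _ _
    (fun y => ?_)).symm
  simp [mul_assoc, mul_inv_rev]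

theorem translate_convC (h : G) (f u : G → ℂ) :
    convC (translate h f) u = translate h (convC f u) := by
  funext g
  simp only [convC, translate]
  refine (Fintype.sum_bijective (fun y => h * y) (Group.mulLeft_bijective h) _ _
    (fun y => ?_)).symm
  simp [mul_assoc, mul_inv_rev]

theorem convC_eq_sum_translate (f u : G → ℂ) :
    convC f u = ∑ g : G, f g • translate g u := by
  funext x
  simp [convC, translate, Finset.sum_apply]

theorem convC_sub_right (f a b : G → ℂ) : convC f (a - b) = convC f a - convC f b := by
  funext g; simp [convC, mul_sub, Finset.sum_sub_distrib]

theorem convC_sub_left (f a b : G → ℂ) : convC (a - b) f = convC a f - convC b f := by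
  funext g; simp [convC, sub_mul, Finset.sum_sub_distrib]

-- innerC lemmas
theorem innerC_conj_symm (a b : G → ℂ) : innerC a b = conj (innerC b a) := by
  simp only [innerC, map_sum, map_mul, RingHom.id_apply, Complex.conj_conj]
  exact Finset.sum_congr rfl fun g _ => (mul_comm _ _)

theorem innerC_add_left (a b c : G → ℂ) : innerC (a + b) c = innerC a c + innerC b c := by
  simp [innerC, add_mul, Finset.sum_add_distrib]

theorem innerC_sub_left (a b c : G → ℂ) : innerC (a - b) c = innerC a c - innerC b c := by
  simp [innerC, sub_mul, Finset.sum_sub_distrib]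

theorem innerC_sub_right (a b c : G → ℂ) : innerC a (b - c) = innerC a b - innerC a c := by
  simp [innerC, mul_sub, Finset.sum_sub_distrib]

theorem innerC_smul_left (r : ℂ) (a b : G → ℂ) : innerC (r • a) b = r * innerC a b := by
  simp [innerC, Finset.mul_sum, mul_assoc]

theorem innerC_smul_right (r : ℂ) (a b : G → ℂ) : innerC a (r • b) = conj r * innerC a b := by
  simp only [innerC, Pi.smul_apply, smul_eq_mul, map_mul, Finset.mul_sum]
  exact Finset.sum_congr rfl fun g _ => by ring

theorem innerC_zero_left (b : G → ℂ) : innerC 0 b = 0 := by simp [innerC]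

theorem innerC_zero_right (a : G → ℂ) : innerC a 0 = 0 := by simp [innerC]

theorem innerC_sum_left {ι : Type} (s : Finset ι) (f : ι → (G → ℂ)) (b : G → ℂ) :
    innerC (∑ i ∈ s, f i) b = ∑ i ∈ s, innerC (f i) b := by
  simp [innerC, Finset.sum_mul]
  exact Finset.sum_comm

theorem innerC_self_eq_zero {a : G → ℂ} : innerC a a = 0 ↔ a = 0 := by
  constructor
  · intro h
    have key : innerC a a = ((∑ g : G, Complex.normSq (a g) : ℝ) : ℂ) := by
      simp [innerC, Complex.mul_conj]
    rw [key] at h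
    have h2 : ∑ g : G, Complex.normSq (a g) = 0 := by exact_mod_cast h
    funext g
    have := (Finset.sum_eq_zero_iff_of_nonneg
      (fun i _ => Complex.normSq_nonneg (a i))).1 h2 g (Finset.mem_univ g)
    exact Complex.normSq_eq_zero.mp this
  · rintro rfl; simp [innerC]

theorem translate_innerC (h : G) (a b : G → ℂ) :
    innerC (translate h a) (translate h b) = innerC a b := by
  simp only [innerC, translate]
  exact Fintype.sum_bijective (fun y => h * y) (Group.mulLeft_bijective h) _ _
    (fun y => by simp [mul_assoc]) |>.symm

theorem innerC_translate_left (h : G) (a b : G → ℂ) :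
    innerC (translate h a) b = innerC a (translate h⁻¹ b) := by
  rw [← translate_innerC h⁻¹ (translate h a) b, translate_translate, inv_mul_cancel,
    translate_one']

-- star lemmas
theorem starC_apply (f : G → ℂ) (g : G) : starC f g = conj (f g⁻¹) := rfl

theorem starC_starC (f : G → ℂ) : starC (starC f) = f := by
  funext g; simp [starC]

theorem starC_convC (a b : G → ℂ) : starC (convC a b) = convC (starC b) (starC a) := by
  funext g
  simp only [starC, convC, map_sum, map_mul]
  refine Fintype.sum_bijective (fun y => g * y) (Group.mulLeft_bijective g) _ _ (fun y => ?_)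
  simp only [mul_inv_rev, inv_inv, inv_mul_cancel_left]
  ring

theorem innerC_starC (a b : G → ℂ) : innerC (starC a) (starC b) = innerC b a := by
  simp only [innerC, starC, Complex.conj_conj]
  refine Fintype.sum_bijective (fun y => y⁻¹) (Equiv.inv G).bijective _ _ (fun y => ?_)
  simp [mul_comm]

theorem innerC_convC_right (a u b : G → ℂ) :
    innerC (convC a u) b = innerC a (convC b (starC u)) := by
  simp only [innerC, convC, starC, Finset.sum_mul, map_sum, map_mul, Complex.conj_conj,
    Finset.mul_sum]
  rw [Finset.sum_comm]
  refine Finset.sum_congr rfl fun x _ => Finset.sum_congr rfl fun g _ => ?_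
  have : (g⁻¹ * x)⁻¹ = x⁻¹ * g := by simp [mul_inv_rev]
  rw [this]; ring

theorem innerC_convC_left (u a b : G → ℂ) :
    innerC (convC u a) b = innerC a (convC (starC u) b) := by
  rw [← innerC_starC b (convC u a), starC_convC, ← innerC_convC_right,
      ← innerC_starC (starC a) (convC (starC b) u), starC_starC, starC_convC, starC_starC]

theorem convC_starC_one (a b : G → ℂ) : convC a (starC b) 1 = innerC a b := by
  simp [convC, starC, innerC]

end Dev
section Dev2

variable {K : Subgroup G} {θ : ↥K →* (V ≃ₗ[ℂ] V)} {v : V}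

theorem nontrivial_of_irr (hirr : IsIrreducibleRep θ) : Nontrivial V := by
  by_contra h
  rw [not_nontrivial_iff_subsingleton] at h
  exact hirr.1 (by ext x; simp [Subsingleton.elim x (0 : V)])

theorem theta_mul_apply (a b : ↥K) (x : V) : θ (a * b) x = θ a (θ b x) := by
  rw [map_mul]; rfl

theorem theta_inv_apply (k : ↥K) (x : V) : θ k (θ k⁻¹ x) = x := by
  rw [← theta_mul_apply, mul_inv_cancel, map_one]; rfl

theorem theta_inv_apply' (k : ↥K) (x : V) : θ k⁻¹ (θ k x) = x := by
  rw [← theta_mul_apply, inv_mul_cancel, map_one]; rfl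

theorem inner_theta_inv (hu : IsUnitaryRep θ) (k : ↥K) (x y : V) :
    (inner ℂ (θ k⁻¹ x) y : ℂ) = inner ℂ x (θ k y) := by
  rw [← hu k (θ k⁻¹ x) y, theta_inv_apply]

theorem inner_theta_inv' (hu : IsUnitaryRep θ) (k : ↥K) (x y : V) :
    (inner ℂ x (θ k⁻¹ y) : ℂ) = inner ℂ (θ k x) y := by
  rw [← hu k x (θ k⁻¹ y), theta_inv_apply]

/-- rank one operator `x ↦ ⟪v,x⟫ v`. -/
def rankOne (v : V) : V →ₗ[ℂ] V where
  toFun x := (inner ℂ v x : ℂ) • v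
  map_add' x y := by simp [inner_add_right, add_smul]
  map_smul' c x := by simp [inner_smul_right, mul_smul]

theorem trace_rankOne (hv : ‖v‖ = 1) : LinearMap.trace ℂ V (rankOne v) = 1 := by
  have h1 : rankOne v = (LinearMap.toSpanSingleton ℂ V v) ∘ₗ ((innerSL ℂ v).toLinearMap) := by
    ext x
    simp [rankOne, LinearMap.toSpanSingleton_apply]
  rw [h1, LinearMap.trace_comp_comm']
  have h2 : (innerSL ℂ v).toLinearMap ∘ₗ LinearMap.toSpanSingleton ℂ V v
      = LinearMap.id := by
    refine LinearMap.ext fun c => ?_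
    simp [LinearMap.toSpanSingleton_apply, inner_smul_right,
      inner_self_eq_norm_sq_to_K, hv]
  rw [h2, LinearMap.trace_id, Module.finrank_self]
  norm_num

theorem schur_scalar (hirr : IsIrreducibleRep θ) (T : V →ₗ[ℂ] V)
    (hT : ∀ (k : ↥K) (x : V), T (θ k x) = θ k (T x)) :
    ∃ c : ℂ, ∀ x, T x = c • x := by
  have : Nontrivial V := nontrivial_of_irr hirr
  obtain ⟨c, hc⟩ := Module.End.exists_eigenvalue (T : Module.End ℂ V)
  obtain ⟨w, hw⟩ := hc.exists_hasEigenvector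
  refine ⟨c, ?_⟩
  set p : Submodule ℂ V := LinearMap.ker (T - c • LinearMap.id) with hp
  have hmem : ∀ x, x ∈ p ↔ T x = c • x := fun x => by
    simp [hp, LinearMap.mem_ker, sub_eq_zero]
  have hinv : ∀ (k : ↥K) (x : V), x ∈ p → θ k x ∈ p := by
    intro k x hx
    rw [hmem] at hx ⊢
    rw [hT, hx, map_smul]
  have hpt : p = ⊤ := by
    rcases hirr.2 p hinv with h | h
    · exfalso
      have hwp : w ∈ p := (hmem w).2 hw.apply_eq_smul
      rw [h] at hwp
      exact hw.2 (by simpa using hwp)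
    · exact h
  intro x
  exact (hmem x).1 (hpt ▸ Submodule.mem_top)

theorem theta_symm (k : ↥K) : (θ k).symm = θ k⁻¹ := by
  refine LinearEquiv.ext fun x => ?_
  exact (θ k).injective (by rw [LinearEquiv.apply_symm_apply, theta_inv_apply])

theorem schur_average (hirr : IsIrreducibleRep θ) (hu : IsUnitaryRep θ) (hv : ‖v‖ = 1)
    (x : V) :
    ∑ k : ↥K, (inner ℂ (θ k v) x : ℂ) • θ k v
      = ((Nat.card ↥K : ℂ) / (Module.finrank ℂ V : ℂ)) • x := by
  haveI : Nontrivial V := nontrivial_of_irr hirr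
  set B : V →ₗ[ℂ] V :=
    ∑ k : ↥K, (θ k).toLinearMap ∘ₗ (rankOne v) ∘ₗ (θ k⁻¹).toLinearMap with hB
  have hBapp : ∀ y, B y = ∑ k : ↥K, (inner ℂ (θ k v) y : ℂ) • θ k v := by
    intro y
    rw [hB, LinearMap.sum_apply]
    refine Finset.sum_congr rfl fun k _ => ?_
    simp only [LinearMap.comp_apply, LinearEquiv.coe_coe]
    show θ k ((inner ℂ v ((θ k⁻¹) y) : ℂ) • v) = _
    rw [map_smul, inner_theta_inv' hu]
  have hcomm : ∀ (j : ↥K) (y : V), B (θ j y) = θ j (B y) := by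
    intro j y
    rw [hBapp, hBapp, map_sum]
    refine (Fintype.sum_bijective (fun k => j * k) (Group.mulLeft_bijective j) _ _
      (fun k => ?_)).symm
    rw [map_smul, theta_mul_apply, hu j]
  obtain ⟨c, hc⟩ := schur_scalar hirr B hcomm
  have htr : LinearMap.trace ℂ V B = (Nat.card ↥K : ℂ) := by
    rw [hB, map_sum]
    have : ∀ k : ↥K,
        LinearMap.trace ℂ V ((θ k).toLinearMap ∘ₗ (rankOne v) ∘ₗ (θ k⁻¹).toLinearMap)
          = 1 := by
      intro k
      have : (θ k).toLinearMap ∘ₗ (rankOne v) ∘ₗ (θ k⁻¹).toLinearMap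
          = (θ k).conj (rankOne v) := by
        rw [LinearEquiv.conj_apply, theta_symm]
        rfl
      rw [this, LinearMap.trace_conj', trace_rankOne hv]
    rw [Finset.sum_congr rfl fun k _ => this k, Finset.sum_const, Finset.card_univ,
      nsmul_eq_mul, mul_one]
    norm_cast
    exact (Nat.card_eq_fintype_card).symm
  have hBid : B = c • LinearMap.id := LinearMap.ext fun y => by simp [hc y]
  have htr2 : LinearMap.trace ℂ V B = c * (Module.finrank ℂ V : ℂ) := by
    rw [hBid, map_smul, LinearMap.trace_id]
    simp
  have hd : (Module.finrank ℂ V : ℂ) ≠ 0 := by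
    have := Module.finrank_pos (R := ℂ) (M := V)
    exact_mod_cast Nat.cast_ne_zero.mpr this.ne'
  have hcval : c = (Nat.card ↥K : ℂ) / (Module.finrank ℂ V : ℂ) := by
    rw [eq_div_iff hd, ← htr2, htr]
  rw [← hBapp, hc, hcval]

theorem schur_inner (hirr : IsIrreducibleRep θ) (hu : IsUnitaryRep θ) (hv : ‖v‖ = 1)
    (x y : V) :
    ∑ k : ↥K, (inner ℂ (θ k v) x : ℂ) * (inner ℂ y (θ k v) : ℂ)
      = ((Nat.card ↥K : ℂ) / (Module.finrank ℂ V : ℂ)) * (inner ℂ y x : ℂ) := by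
  have h := congrArg (fun z => (inner ℂ y z : ℂ)) (schur_average hirr hu hv x)
  simp only [inner_sum, inner_smul_right] at h
  rw [← h]

end Dev2

section Dev3

variable {K : Subgroup G} {θ : ↥K →* (V ≃ₗ[ℂ] V)} {v : V}

theorem psi_eq_zero {g : G} (hg : g ∉ K) : psi K θ v g = 0 := dif_neg hg

theorem psi_coe (k : ↥K) :
    psi K θ v ↑k
      = ((Module.finrank ℂ V : ℂ) / (Nat.card K : ℂ)) * (inner ℂ (θ k v) v : ℂ) := by
  show dite _ _ _ = _
  rw [dif_pos k.2]

theorem sum_subgroup_eq {M : Type} [AddCommMonoid M] (K : Subgroup G) (F : G → M)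
    (h0 : ∀ g : G, g ∉ K → F g = 0) : ∑ g : G, F g = ∑ k : ↥K, F ↑k := by
  classical
  rw [← Finset.sum_filter_of_ne (p := fun g => g ∈ K)
    (fun x _ hx => by by_contra h; exact hx (h0 x h))]
  rw [Finset.sum_subtype (p := fun g => g ∈ K) (Finset.univ.filter (fun g => g ∈ K))
    (fun x => by simp) F]

theorem natCardK_ne_zero : (Nat.card ↥K : ℂ) ≠ 0 := by
  have : 0 < Nat.card ↥K := Nat.card_pos
  exact_mod_cast Nat.cast_ne_zero.mpr this.ne'

theorem starC_psi (hu : IsUnitaryRep θ) : starC (psi K θ v) = psi K θ v := by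
  funext g
  by_cases hg : g ∈ K
  · have hg' : g⁻¹ ∈ K := inv_mem hg
    have h1 : psi K θ v g⁻¹ = psi K θ v ↑((⟨g, hg⟩ : ↥K)⁻¹) := rfl
    have h2 : psi K θ v g = psi K θ v ↑(⟨g, hg⟩ : ↥K) := rfl
    rw [starC_apply, h1, h2, psi_coe, psi_coe, map_mul]
    congr 1
    · simp [map_div₀]
    · rw [inner_conj_symm, ← inner_theta_inv' hu]
  · have hg' : g⁻¹ ∉ K := fun h => hg (by simpa using inv_mem h)
    rw [starC_apply, psi_eq_zero hg, psi_eq_zero hg', map_zero]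

theorem psi_one (hv : ‖v‖ = 1) :
    psi K θ v 1 = (Module.finrank ℂ V : ℂ) / (Nat.card K : ℂ) := by
  have h1 : psi K θ v 1 = psi K θ v ↑(1 : ↥K) := rfl
  rw [h1, psi_coe, map_one]
  show _ * (inner ℂ v v : ℂ) = _
  rw [inner_self_eq_norm_sq_to_K, hv]
  norm_num

theorem psi_idem (hirr : IsIrreducibleRep θ) (hu : IsUnitaryRep θ) (hv : ‖v‖ = 1) :
    convC (psi K θ v) (psi K θ v) = psi K θ v := by
  haveI : Nontrivial V := nontrivial_of_irr hirr
  have hd : (Module.finrank ℂ V : ℂ) ≠ 0 := by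
    have := Module.finrank_pos (R := ℂ) (M := V)
    exact_mod_cast Nat.cast_ne_zero.mpr this.ne'
  funext g
  by_cases hg : g ∈ K
  · show ∑ h : G, psi K θ v h * psi K θ v (h⁻¹ * g) = _
    rw [sum_subgroup_eq K _ (fun h hh => by rw [psi_eq_zero hh, zero_mul])]
    set g0 : ↥K := ⟨g, hg⟩ with hg0
    have key : ∀ k : ↥K, psi K θ v ↑k * psi K θ v ((k : G)⁻¹ * g)
        = ((Module.finrank ℂ V : ℂ) / (Nat.card K : ℂ))^2 *
          ((inner ℂ (θ k v) v : ℂ) * (inner ℂ (θ g0 v) (θ k v) : ℂ)) := by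
      intro k
      have h1 : psi K θ v ((k : G)⁻¹ * g) = psi K θ v ↑(k⁻¹ * g0) := rfl
      rw [h1, psi_coe, psi_coe, theta_mul_apply, inner_theta_inv hu]
      ring
    rw [Finset.sum_congr rfl fun k _ => key k, ← Finset.mul_sum,
      schur_inner hirr hu hv v (θ g0 v)]
    have h2 : psi K θ v g = psi K θ v ↑g0 := rfl
    rw [h2, psi_coe]
    have hK : (Nat.card ↥K : ℂ) ≠ 0 := natCardK_ne_zero
    field_simp
  · show ∑ h : G, psi K θ v h * psi K θ v (h⁻¹ * g) = _
    rw [psi_eq_zero hg]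
    refine Finset.sum_eq_zero fun h _ => ?_
    by_cases hh : h ∈ K
    · have : h⁻¹ * g ∉ K := fun hmem => hg (by
        have := mul_mem hh hmem
        simpa using this)
      rw [psi_eq_zero this, mul_zero]
    · rw [psi_eq_zero hh, zero_mul]

end Dev3
section Dev4

variable {K : Subgroup G} {θ : ↥K →* (V ≃ₗ[ℂ] V)} {v : V}

theorem finrankV_ne_zero (hirr : IsIrreducibleRep θ) : (Module.finrank ℂ V : ℂ) ≠ 0 := by
  haveI : Nontrivial V := nontrivial_of_irr hirr
  have := Module.finrank_pos (R := ℂ) (M := V)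
  exact_mod_cast Nat.cast_ne_zero.mpr this.ne'

theorem convC_psi_apply (f : G → ℂ) (g : G) :
    convC f (psi K θ v) g = ∑ k : ↥K, f (g * (k : G)) * psi K θ v ((k : G)⁻¹) := by
  have h1 : convC f (psi K θ v) g = ∑ j : G, f (g * j) * psi K θ v j⁻¹ := by
    show ∑ h : G, f h * psi K θ v (h⁻¹ * g) = _
    refine (Fintype.sum_bijective (fun j => g * j) (Group.mulLeft_bijective g) _ _
      (fun j => ?_)).symm
    simp [mul_inv_rev, mul_assoc]
  rw [h1]
  exact sum_subgroup_eq K _ (fun j hj => by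
    rw [psi_eq_zero (fun h => hj (by simpa using inv_mem h)), mul_zero])

theorem convC_psi_left_apply (f : G → ℂ) (g : G) :
    convC (psi K θ v) f g = ∑ k : ↥K, psi K θ v (k : G) * f ((k : G)⁻¹ * g) :=
  sum_subgroup_eq K _ (fun j hj => by rw [psi_eq_zero hj, zero_mul])

/-- The map `F ↦ ⟪v, F ·⟫` from `G → V` to `L(G)`. -/
def PhiL (v : V) : (G → V) →ₗ[ℂ] (G → ℂ) where
  toFun F := fun g => (inner ℂ v (F g) : ℂ)
  map_add' F₁ F₂ := by funext g; simp [inner_add_right]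
  map_smul' c F := by funext g; simp [inner_smul_right]

/-- The map `f ↦ (g ↦ ∑_k f (g k) θ k v)` from `L(G)` to `G → V`. -/
def PsiL (K : Subgroup G) (θ : ↥K →* (V ≃ₗ[ℂ] V)) (v : V) : (G → ℂ) →ₗ[ℂ] (G → V) where
  toFun f := fun g => ∑ k : ↥K, f (g * (k : G)) • θ k v
  map_add' a b := by funext g; simp [add_smul, Finset.sum_add_distrib]
  map_smul' c a := by funext g; simp [Finset.smul_sum, mul_smul]

theorem PhiL_apply (F : G → V) (g : G) : PhiL v F g = (inner ℂ v (F g) : ℂ) := rfl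

theorem PsiL_apply (f : G → ℂ) (g : G) :
    PsiL K θ v f g = ∑ k : ↥K, f (g * (k : G)) • θ k v := rfl

theorem PsiL_mem_ind (f : G → ℂ) : PsiL K θ v f ∈ ind K θ := by
  intro g k₀
  show (∑ k : ↥K, f (g * ↑k₀ * ↑k) • θ k v) = θ k₀⁻¹ (∑ k : ↥K, f (g * ↑k) • θ k v)
  rw [map_sum]
  refine (Fintype.sum_bijective (fun k : ↥K => k₀⁻¹ * k)
    (Group.mulLeft_bijective k₀⁻¹) _ _ (fun k => ?_)).symm
  rw [map_smul, ← theta_mul_apply]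
  congr 2
  push_cast
  group

theorem PhiL_translate (h : G) (F : G → V) :
    PhiL v (translate h F) = translate h (PhiL v F) := rfl

theorem PsiL_translate (h : G) (f : G → ℂ) :
    PsiL K θ v (translate h f) = translate h (PsiL K θ v f) := by
  funext g
  show (∑ k : ↥K, f (h⁻¹ * (g * ↑k)) • θ k v) = ∑ k : ↥K, f (h⁻¹ * g * ↑k) • θ k v
  simp [mul_assoc]

theorem PhiL_PsiL (hirr : IsIrreducibleRep θ) (hu : IsUnitaryRep θ) (f : G → ℂ) :
    PhiL v (PsiL K θ v f)
      = ((Nat.card ↥K : ℂ) / (Module.finrank ℂ V : ℂ)) • convC f (psi K θ v) := by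
  have hd := finrankV_ne_zero (θ := θ) hirr
  have hK : (Nat.card ↥K : ℂ) ≠ 0 := natCardK_ne_zero (K := K)
  funext g
  show (inner ℂ v (∑ k : ↥K, f (g * ↑k) • θ k v) : ℂ) = _
  rw [inner_sum, Pi.smul_apply, convC_psi_apply, smul_eq_mul, Finset.mul_sum]
  refine Finset.sum_congr rfl fun k _ => ?_
  rw [inner_smul_right]
  have h1 : psi K θ v ((k : G)⁻¹) = psi K θ v ↑(k⁻¹) := rfl
  rw [h1, psi_coe, inner_theta_inv hu]
  field_simp

theorem PsiL_PhiL (hirr : IsIrreducibleRep θ) (hu : IsUnitaryRep θ) (hv : ‖v‖ = 1)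
    {F : G → V} (hF : F ∈ ind K θ) :
    PsiL K θ v (PhiL v F) = ((Nat.card ↥K : ℂ) / (Module.finrank ℂ V : ℂ)) • F := by
  funext g
  show (∑ k : ↥K, (inner ℂ v (F (g * ↑k)) : ℂ) • θ k v) = _
  have hFk : ∀ k : ↥K, F (g * ↑k) = θ k⁻¹ (F g) := fun k => hF g k
  calc (∑ k : ↥K, (inner ℂ v (F (g * ↑k)) : ℂ) • θ k v)
      = ∑ k : ↥K, (inner ℂ (θ k v) (F g) : ℂ) • θ k v := by
        refine Finset.sum_congr rfl fun k _ => ?_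
        rw [hFk k, inner_theta_inv' hu]
    _ = ((Nat.card ↥K : ℂ) / (Module.finrank ℂ V : ℂ)) • F g :=
        schur_average hirr hu hv (F g)

theorem cardDivFinrank_ne_zero (hirr : IsIrreducibleRep θ) :
    ((Nat.card ↥K : ℂ) / (Module.finrank ℂ V : ℂ)) ≠ 0 :=
  div_ne_zero (natCardK_ne_zero (K := K)) (finrankV_ne_zero (θ := θ) hirr)

theorem mem_ISub_iff {f : G → ℂ} : f ∈ ISub K θ v ↔ convC f (psi K θ v) = f := Iff.rfl

theorem mem_HSet_iff {f : G → ℂ} :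
    f ∈ HSet K θ v ↔ convC (convC (psi K θ v) f) (psi K θ v) = f := Iff.rfl

theorem PhiL_mem_ISub (hirr : IsIrreducibleRep θ) (hu : IsUnitaryRep θ) (hv : ‖v‖ = 1)
    {F : G → V} (hF : F ∈ ind K θ) : PhiL v F ∈ ISub K θ v := by
  rw [mem_ISub_iff]
  have h2 := congrArg (PhiL v) (PsiL_PhiL hirr hu hv hF)
  rw [map_smul, PhiL_PsiL hirr hu] at h2
  exact smul_right_injective (G → ℂ) (cardDivFinrank_ne_zero hirr) h2

theorem ISub_invariant : IsInvariantSub (ISub K θ v) := by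
  intro h f hf
  rw [mem_ISub_iff] at hf ⊢
  rw [translate_convC, hf]

theorem mem_ISub_of (h2 : convC f (psi K θ v) = f) : f ∈ ISub K θ v := h2

theorem mem_HSet_of {f : G → ℂ} (h1 : convC (psi K θ v) f = f)
    (h2 : convC f (psi K θ v) = f) : f ∈ HSet K θ v := by
  rw [mem_HSet_iff, h1, h2]

theorem HSet_subset_ISub (hirr : IsIrreducibleRep θ) (hu : IsUnitaryRep θ) (hv : ‖v‖ = 1)
    {f : G → ℂ} (hf : f ∈ HSet K θ v) : f ∈ ISub K θ v := by
  rw [mem_HSet_iff] at hf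
  rw [mem_ISub_iff]
  conv_lhs => rw [← hf]
  rw [convC_assoc (convC (psi K θ v) f), psi_idem hirr hu hv, hf]

theorem psi_convC_of_HSet (hirr : IsIrreducibleRep θ) (hu : IsUnitaryRep θ) (hv : ‖v‖ = 1)
    {f : G → ℂ} (hf : f ∈ HSet K θ v) : convC (psi K θ v) f = f := by
  rw [mem_HSet_iff] at hf
  have key : convC (psi K θ v) (convC (convC (psi K θ v) f) (psi K θ v))
      = convC (convC (psi K θ v) f) (psi K θ v) := by
    rw [← convC_assoc, ← convC_assoc, psi_idem hirr hu hv]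
  rw [hf] at key
  exact key

theorem starC_mem_HSet (hirr : IsIrreducibleRep θ) (hu : IsUnitaryRep θ) (hv : ‖v‖ = 1)
    {f : G → ℂ} (hf : f ∈ HSet K θ v) : starC f ∈ HSet K θ v := by
  have h1 : convC f (psi K θ v) = f := HSet_subset_ISub hirr hu hv hf
  have h2 : convC (psi K θ v) f = f := psi_convC_of_HSet hirr hu hv hf
  refine mem_HSet_of ?_ ?_
  · have := congrArg starC h1
    rwa [starC_convC, starC_psi hu] at this
  · have := congrArg starC h2
    rwa [starC_convC, starC_psi hu] at this

theorem convC_mem_HSet (hirr : IsIrreducibleRep θ) (hu : IsUnitaryRep θ) (hv : ‖v‖ = 1)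
    {a b : G → ℂ} (ha : a ∈ HSet K θ v) (hb : b ∈ HSet K θ v) :
    convC a b ∈ HSet K θ v := by
  refine mem_HSet_of ?_ ?_
  · rw [← convC_assoc, psi_convC_of_HSet hirr hu hv ha]
  · rw [convC_assoc, HSet_subset_ISub hirr hu hv hb]

theorem convC_mem_ISub {a b : G → ℂ} (hb : b ∈ ISub K θ v) :
    convC a b ∈ ISub K θ v := by
  rw [mem_ISub_iff] at hb ⊢
  rw [convC_assoc, hb]

theorem ISub_eq_sum {f : G → ℂ} (hf : f ∈ ISub K θ v) :
    f = ∑ g : G, f g • translate g (psi K θ v) := by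
  conv_lhs => rw [← hf]
  exact convC_eq_sum_translate f (psi K θ v)

theorem psi_mem_HSet (hirr : IsIrreducibleRep θ) (hu : IsUnitaryRep θ) (hv : ‖v‖ = 1) :
    psi K θ v ∈ HSet K θ v :=
  mem_HSet_of (psi_idem hirr hu hv) (psi_idem hirr hu hv)

theorem psi_ne_zero (hirr : IsIrreducibleRep θ) (hv : ‖v‖ = 1) : psi K θ v ≠ 0 := by
  intro h
  have := psi_one (K := K) (θ := θ) hv
  rw [h] at this
  exact (div_ne_zero (finrankV_ne_zero (θ := θ) hirr) (natCardK_ne_zero (K := K)))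
    (by simpa using this.symm)

end Dev4
section Dev5

/-- Identification of `G → ℂ` with the Euclidean space over `G`. -/
def E2 : (G → ℂ) ≃ₗ[ℂ] EuclideanSpace ℂ G := (WithLp.linearEquiv 2 ℂ (G → ℂ)).symm

theorem inner_E2 (a b : G → ℂ) : (inner ℂ (E2 a) (E2 b) : ℂ) = innerC b a := by
  rw [PiLp.inner_apply]
  simp only [RCLike.inner_apply, innerC]
  exact Finset.sum_congr rfl fun g _ => rfl

/-- Orthogonal projection onto a subspace `W` of `L(G)`. -/
def EWl (W : Submodule ℂ (G → ℂ)) : (G → ℂ) →ₗ[ℂ] (G → ℂ) :=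
  E2.symm.toLinearMap ∘ₗ
    ((W.map (E2.toLinearMap : (G → ℂ) →ₗ[ℂ] EuclideanSpace ℂ G)).subtype ∘ₗ
      (Submodule.orthogonalProjectionOnto (W.map (E2.toLinearMap : (G → ℂ) →ₗ[ℂ] EuclideanSpace ℂ G))).toLinearMap) ∘ₗ
    E2.toLinearMap

theorem EWl_apply (W : Submodule ℂ (G → ℂ)) (f : G → ℂ) :
    EWl W f = E2.symm
      ((Submodule.orthogonalProjectionOnto (W.map (E2.toLinearMap : (G → ℂ) →ₗ[ℂ] EuclideanSpace ℂ G))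
        (E2 f) : EuclideanSpace ℂ G)) := rfl

theorem EWl_mem (W : Submodule ℂ (G → ℂ)) (f : G → ℂ) : EWl W f ∈ W := by
  have h := (Submodule.orthogonalProjectionOnto
    (W.map (E2.toLinearMap : (G → ℂ) →ₗ[ℂ] EuclideanSpace ℂ G)) (E2 f)).2
  rcases Submodule.mem_map.mp h with ⟨w, hw, hwe⟩
  rw [EWl_apply, ← hwe]
  simpa using hw

theorem E2_EWl (W : Submodule ℂ (G → ℂ)) (f : G → ℂ) :
    E2 (EWl W f) = (Submodule.orthogonalProjectionOnto
      (W.map (E2.toLinearMap : (G → ℂ) →ₗ[ℂ] EuclideanSpace ℂ G)) (E2 f) :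
        EuclideanSpace ℂ G) := by
  rw [EWl_apply, LinearEquiv.apply_symm_apply]

theorem EWl_orth (W : Submodule ℂ (G → ℂ)) (f : G → ℂ) :
    ∀ w ∈ W, innerC (f - EWl W f) w = 0 := by
  intro w hw
  have h := Submodule.starProjection_inner_eq_zero (E2 f) (E2 w)
    (Submodule.mem_map_of_mem (f := (E2.toLinearMap : (G → ℂ) →ₗ[ℂ] EuclideanSpace ℂ G)) hw)
  rw [Submodule.starProjection_apply] at h
  have h2 : E2 f - (Submodule.orthogonalProjectionOnto
      (W.map (E2.toLinearMap : (G → ℂ) →ₗ[ℂ] EuclideanSpace ℂ G)) (E2 f) :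
        EuclideanSpace ℂ G) = E2 (f - EWl W f) := by
    rw [map_sub, E2_EWl]
  rw [h2] at h
  rw [← inner_E2]
  rw [← inner_conj_symm, h, map_zero]

theorem EWl_of_mem (W : Submodule ℂ (G → ℂ)) {f : G → ℂ} (hf : f ∈ W) : EWl W f = f := by
  rw [EWl_apply]
  have h := Submodule.orthogonalProjectionOnto_mem_subspace_eq_self
    (K := W.map (E2.toLinearMap : (G → ℂ) →ₗ[ℂ] EuclideanSpace ℂ G))
    ⟨E2 f, Submodule.mem_map_of_mem hf⟩
  have h2 : Submodule.orthogonalProjectionOnto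
      (W.map (E2.toLinearMap : (G → ℂ) →ₗ[ℂ] EuclideanSpace ℂ G)) (E2 f)
      = ⟨E2 f, Submodule.mem_map_of_mem hf⟩ := h
  rw [h2]
  exact E2.symm_apply_apply f

theorem EWl_unique (W : Submodule ℂ (G → ℂ)) {f w : G → ℂ} (hw : w ∈ W)
    (horth : ∀ u ∈ W, innerC (f - w) u = 0) : EWl W f = w := by
  have hmem : w - EWl W f ∈ W := W.sub_mem hw (EWl_mem W f)
  have hz : innerC (w - EWl W f) (w - EWl W f) = 0 := by
    have e1 : innerC (f - EWl W f) (w - EWl W f) = 0 := EWl_orth W f _ hmem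
    have e2 : innerC (f - w) (w - EWl W f) = 0 := horth _ hmem
    have e3 : (f - EWl W f) - (f - w) = w - EWl W f := by abel
    calc innerC (w - EWl W f) (w - EWl W f)
        = innerC ((f - EWl W f) - (f - w)) (w - EWl W f) := by rw [e3]
      _ = innerC (f - EWl W f) (w - EWl W f) - innerC (f - w) (w - EWl W f) :=
          innerC_sub_left _ _ _
      _ = 0 := by rw [e1, e2, sub_zero]
  have := innerC_self_eq_zero.mp hz
  have := sub_eq_zero.mp this
  exact this.symm

theorem EWl_translate {W : Submodule ℂ (G → ℂ)} (hW : IsInvariantSub W) (h : G)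
    (f : G → ℂ) : EWl W (translate h f) = translate h (EWl W f) := by
  refine EWl_unique W (hW h _ (EWl_mem W f)) ?_
  intro u hu
  have h2 : translate h f - translate h (EWl W f) = translate h (f - EWl W f) := by
    funext g; simp [translate]
  rw [h2, innerC_translate_left]
  exact EWl_orth W f _ (hW h⁻¹ u hu)

theorem EWl_selfadj (W : Submodule ℂ (G → ℂ)) (a b : G → ℂ) :
    innerC (EWl W a) b = innerC a (EWl W b) := by
  have h1 : innerC (EWl W a) b = innerC (EWl W a) (EWl W b) := by
    have e : innerC (EWl W a) b - innerC (EWl W a) (EWl W b)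
        = innerC (EWl W a) (b - EWl W b) := (innerC_sub_right _ _ _).symm
    have e2 : innerC (EWl W a) (b - EWl W b) = 0 := by
      rw [innerC_conj_symm, EWl_orth W b _ (EWl_mem W a), map_zero]
    have := e.trans e2
    linear_combination this
  have h2 : innerC a (EWl W b) = innerC (EWl W a) (EWl W b) := by
    have e : innerC a (EWl W b) - innerC (EWl W a) (EWl W b)
        = innerC (a - EWl W a) (EWl W b) := (innerC_sub_left _ _ _).symm
    have e2 : innerC (a - EWl W a) (EWl W b) = 0 := EWl_orth W a _ (EWl_mem W b)
    have := e.trans e2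
    linear_combination this
  rw [h1, h2]

/-- The orthogonal complement (w.r.t. `innerC`) of a set of functions. -/
def ocS (p : Submodule ℂ (G → ℂ)) : Submodule ℂ (G → ℂ) where
  carrier := {f | ∀ u ∈ p, innerC f u = 0}
  add_mem' := by
    intro a b ha hb u hu
    rw [innerC_add_left, ha u hu, hb u hu, add_zero]
  zero_mem' := fun u _ => innerC_zero_left u
  smul_mem' := by
    intro c a ha u hu
    rw [innerC_smul_left, ha u hu, mul_zero]

theorem mem_ocS {p : Submodule ℂ (G → ℂ)} {f : G → ℂ} :
    f ∈ ocS p ↔ ∀ u ∈ p, innerC f u = 0 := Iff.rfl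

theorem ocS_invariant {p : Submodule ℂ (G → ℂ)} (hp : IsInvariantSub p) :
    IsInvariantSub (ocS p) := by
  intro h f hf u hu
  rw [innerC_translate_left]
  exact hf _ (hp h⁻¹ u hu)

/-- Left translation as a linear endomorphism. -/
def traL {A : Type} [AddCommGroup A] [Module ℂ A] (h : G) : (G → A) →ₗ[ℂ] (G → A) where
  toFun := translate h
  map_add' a b := rfl
  map_smul' c a := rfl

theorem sphSpan_invariant (φ : G → ℂ) : IsInvariantSub (sphSpan φ) := by
  intro h f hf
  have hle : Submodule.map (traL h) (sphSpan φ) ≤ sphSpan φ := by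
    rw [sphSpan, Submodule.map_span, Submodule.span_le]
    rintro x ⟨y, ⟨g, rfl⟩, rfl⟩
    exact Submodule.subset_span ⟨h * g, (translate_translate h g φ).symm⟩
  exact hle (Submodule.mem_map_of_mem hf)

theorem iSup_invariant {ι : Sort*} (p : ι → Submodule ℂ (G → ℂ))
    (hp : ∀ i, IsInvariantSub (p i)) : IsInvariantSub (⨆ i, p i) := by
  intro h f hf
  have hle : Submodule.map (traL h) (⨆ i, p i) ≤ ⨆ i, p i := by
    rw [Submodule.map_iSup]
    exact iSup_mono fun i => Submodule.map_le_iff_le_comap.mpr (fun x hx => hp i h x hx)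
  exact hle (Submodule.mem_map_of_mem hf)

theorem inf_invariant {p q : Submodule ℂ (G → ℂ)} (hp : IsInvariantSub p)
    (hq : IsInvariantSub q) : IsInvariantSub (p ⊓ q) := by
  intro h f hf
  exact ⟨hp h f hf.1, hq h f hf.2⟩

theorem exists_irred_aux : ∀ (n : ℕ) (p : Submodule ℂ (G → ℂ)),
    Module.finrank ℂ ↥p ≤ n → IsInvariantSub p → p ≠ ⊥ →
    ∃ W : Submodule ℂ (G → ℂ), W ≤ p ∧ IsInvariantSub W ∧ W ≠ ⊥ ∧
      ∀ q : Submodule ℂ (G → ℂ), q ≤ W → IsInvariantSub q → q = ⊥ ∨ q = W := by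
  intro n
  induction n with
  | zero =>
    intro p hpn hinv hne
    exfalso
    exact hne (Submodule.finrank_eq_zero.mp (Nat.le_zero.mp hpn))
  | succ n ih =>
    intro p hpn hinv hne
    by_cases hcase : ∀ q : Submodule ℂ (G → ℂ), q ≤ p → IsInvariantSub q →
        q = ⊥ ∨ q = p
    · exact ⟨p, le_rfl, hinv, hne, hcase⟩
    · push_neg at hcase
      obtain ⟨q, hqle, hqinv, hqne⟩ := hcase
      have hlt : q < p := lt_of_le_of_ne hqle hqne.2
      have hfr : Module.finrank ℂ ↥q ≤ n := by
        have := Submodule.finrank_lt_finrank_of_lt hlt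
        omega
      obtain ⟨W, hW1, hW2, hW3, hW4⟩ := ih q hfr hqinv hqne.1
      exact ⟨W, hW1.trans hqle, hW2, hW3, hW4⟩

theorem exists_irred (p : Submodule ℂ (G → ℂ)) (hinv : IsInvariantSub p) (hne : p ≠ ⊥) :
    ∃ W : Submodule ℂ (G → ℂ), W ≤ p ∧ IsInvariantSub W ∧ W ≠ ⊥ ∧
      ∀ q : Submodule ℂ (G → ℂ), q ≤ W → IsInvariantSub q → q = ⊥ ∨ q = W :=
  exists_irred_aux (Module.finrank ℂ ↥p) p le_rfl hinv hne

end Dev5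
section Dev6

variable {K : Subgroup G} {θ : ↥K →* (V ≃ₗ[ℂ] V)} {v : V}

/-- Translation on an invariant subspace, as a linear automorphism. -/
def traSubE {W : Submodule ℂ (G → ℂ)} (hW : IsInvariantSub W) (g : G) : ↥W ≃ₗ[ℂ] ↥W where
  toFun f := ⟨translate g ↑f, hW g ↑f f.2⟩
  invFun f := ⟨translate g⁻¹ ↑f, hW g⁻¹ ↑f f.2⟩
  map_add' a b := by apply Subtype.ext; rfl
  map_smul' c a := by apply Subtype.ext; rfl
  left_inv f := by
    apply Subtype.ext
    have h : translate g⁻¹ (translate g (↑f : G → ℂ)) = (↑f : G → ℂ) := by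
      rw [translate_translate, inv_mul_cancel, translate_one']
    exact h
  right_inv f := by
    apply Subtype.ext
    have h : translate g (translate g⁻¹ (↑f : G → ℂ)) = (↑f : G → ℂ) := by
      rw [translate_translate, mul_inv_cancel, translate_one']
    exact h

/-- Translation action on an invariant subspace as a representation. -/
def traSub {W : Submodule ℂ (G → ℂ)} (hW : IsInvariantSub W) : G →* (↥W ≃ₗ[ℂ] ↥W) where
  toFun := traSubE hW
  map_one' := by
    apply LinearEquiv.ext; intro f; apply Subtype.ext
    show translate 1 (↑f : G → ℂ) = ↑f
    exact translate_one' _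
  map_mul' g h := by
    apply LinearEquiv.ext; intro f; apply Subtype.ext
    show translate (g * h) (↑f : G → ℂ) = translate g (translate h ↑f)
    exact (translate_translate g h (↑f : G → ℂ)).symm

theorem traSub_coe {W : Submodule ℂ (G → ℂ)} (hW : IsInvariantSub W) (g : G) (w : ↥W) :
    (↑(traSub hW g w) : G → ℂ) = translate g ↑w := rfl

theorem traSub_irr {W : Submodule ℂ (G → ℂ)} (hW : IsInvariantSub W) (hWne : W ≠ ⊥)
    (hWirr : ∀ q : Submodule ℂ (G → ℂ), q ≤ W → IsInvariantSub q → q = ⊥ ∨ q = W) :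
    IsIrreducibleRep (traSub hW) := by
  constructor
  · haveI : Nontrivial ↥W := Submodule.nontrivial_iff_ne_bot.mpr hWne
    intro h
    obtain ⟨x, hx⟩ := exists_ne (0 : ↥W)
    have hmem : x ∈ (⊥ : Submodule ℂ ↥W) := h ▸ Submodule.mem_top
    exact hx (by simpa using hmem)
  · intro p hp
    set q : Submodule ℂ (G → ℂ) := p.map W.subtype with hq
    have hqle : q ≤ W := by
      rintro x ⟨y, _, rfl⟩
      exact y.2
    have hqinv : IsInvariantSub q := by
      intro h f hf
      rcases hf with ⟨y, hy, rfl⟩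
      exact ⟨traSub hW h y, hp h y hy, rfl⟩
    rcases hWirr q hqle hqinv with h | h
    · left
      apply Submodule.map_injective_of_injective (Submodule.injective_subtype W)
      rw [Submodule.map_bot]
      exact h
    · right
      apply Submodule.map_injective_of_injective (Submodule.injective_subtype W)
      rw [Submodule.map_subtype_top]
      exact h

/-- The space of intertwiners from an invariant subspace `W ≤ I(G,K,ψ)` into `I(G,K,ψ)`. -/
def homGI (K : Subgroup G) (θ : ↥K →* (V ≃ₗ[ℂ] V)) (v : V) {W : Submodule ℂ (G → ℂ)}
    (hW : IsInvariantSub W) : Submodule ℂ (↥W →ₗ[ℂ] (G → ℂ)) where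
  carrier := {A | (∀ w : ↥W, A w ∈ ISub K θ v) ∧
    ∀ (g : G) (w : ↥W), A (traSub hW g w) = translate g (A w)}
  add_mem' := by
    rintro A B ⟨hA1, hA2⟩ ⟨hB1, hB2⟩
    refine ⟨fun w => (ISub K θ v).add_mem (hA1 w) (hB1 w), fun g w => ?_⟩
    funext x
    simp [translate, hA2 g w, hB2 g w]
  zero_mem' := by
    refine ⟨fun w => (ISub K θ v).zero_mem, fun g w => ?_⟩
    funext x
    simp [translate]
  smul_mem' := by
    rintro c A ⟨hA1, hA2⟩
    refine ⟨fun w => (ISub K θ v).smul_mem c (hA1 w), fun g w => ?_⟩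
    funext x
    simp [translate, hA2 g w]

theorem finrank_homGI_le_one (hirr : IsIrreducibleRep θ) (hu : IsUnitaryRep θ)
    (hv : ‖v‖ = 1) (hmf : IsMultFree K θ) {W : Submodule ℂ (G → ℂ)}
    (hW : IsInvariantSub W) (hWne : W ≠ ⊥)
    (hWirr : ∀ q : Submodule ℂ (G → ℂ), q ≤ W → IsInvariantSub q → q = ⊥ ∨ q = W) :
    Module.finrank ℂ ↥(homGI K θ v hW) ≤ 1 := by
  have hR := hmf ↥W (traSub hW) (traSub_irr hW hWne hWirr)
  have hJmem : ∀ A : ↥(homGI K θ v hW),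
      PsiL K θ v ∘ₗ A.1 ∈ homGInd K θ (traSub hW) := by
    intro A
    refine ⟨fun w => PsiL_mem_ind _, fun g w => ?_⟩
    simp only [LinearMap.comp_apply]
    rw [A.2.2 g w, PsiL_translate]
  let J : ↥(homGI K θ v hW) →ₗ[ℂ] ↥(homGInd K θ (traSub hW)) :=
    { toFun := fun A => ⟨PsiL K θ v ∘ₗ A.1, hJmem A⟩
      map_add' := fun A B => Subtype.ext (by
        ext w
        simp)
      map_smul' := fun c A => Subtype.ext (by
        ext w
        simp) }
  have hinj : Function.Injective J := by
    intro A B hAB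
    have hval : PsiL K θ v ∘ₗ A.1 = PsiL K θ v ∘ₗ B.1 := congrArg Subtype.val hAB
    apply Subtype.ext
    refine LinearMap.ext fun w => ?_
    have h1 : PsiL K θ v (A.1 w) = PsiL K θ v (B.1 w) := by
      have := LinearMap.congr_fun hval w
      simpa using this
    have h2 := congrArg (PhiL v) h1
    rw [PhiL_PsiL hirr hu, PhiL_PsiL hirr hu] at h2
    obtain ⟨hA1, -⟩ := A.2
    obtain ⟨hB1, -⟩ := B.2
    rw [mem_ISub_iff.mp (hA1 w), mem_ISub_iff.mp (hB1 w)] at h2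
    exact smul_right_injective (G → ℂ) (cardDivFinrank_ne_zero hirr) h2
  calc Module.finrank ℂ ↥(homGI K θ v hW)
      ≤ Module.finrank ℂ ↥(homGInd K θ (traSub hW)) :=
        LinearMap.finrank_le_finrank_of_injective hinj
    _ ≤ 1 := hR

theorem exists_smul_of_finrank_le_one {M : Type} [AddCommGroup M] [Module ℂ M]
    [FiniteDimensional ℂ M] (hfr : Module.finrank ℂ M ≤ 1) {x : M} (hx : x ≠ 0)
    {y : M} : ∃ c : ℂ, y = c • x := by
  have hspan : Submodule.span ℂ ({x} : Set M) = ⊤ := by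
    apply Submodule.eq_top_of_finrank_eq
    have h1 := finrank_span_singleton (K := ℂ) hx
    have h2 := Submodule.finrank_le (Submodule.span ℂ ({x} : Set M))
    omega
  have hmem : y ∈ Submodule.span ℂ ({x} : Set M) := hspan ▸ Submodule.mem_top
  obtain ⟨c, hc⟩ := Submodule.mem_span_singleton.mp hmem
  exact ⟨c, hc.symm⟩

theorem hom_scalar (hirr : IsIrreducibleRep θ) (hu : IsUnitaryRep θ) (hv : ‖v‖ = 1)
    (hmf : IsMultFree K θ) {W : Submodule ℂ (G → ℂ)} (hWle : W ≤ ISub K θ v)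
    (hW : IsInvariantSub W) (hWne : W ≠ ⊥)
    (hWirr : ∀ q : Submodule ℂ (G → ℂ), q ≤ W → IsInvariantSub q → q = ⊥ ∨ q = W)
    (A : ↥W →ₗ[ℂ] (G → ℂ)) (hA1 : ∀ w, A w ∈ ISub K θ v)
    (hA2 : ∀ (g : G) (w : ↥W), A (traSub hW g w) = translate g (A w)) :
    ∃ c : ℂ, ∀ w : ↥W, A w = c • (w : G → ℂ) := by
  set M := homGI K θ v hW with hM
  have hAmem : A ∈ M := ⟨hA1, hA2⟩
  have hImem : W.subtype ∈ M := ⟨fun w => hWle w.2, fun g w => rfl⟩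
  have hIne : (⟨W.subtype, hImem⟩ : ↥M) ≠ 0 := by
    intro h
    have hsub : W.subtype = 0 := congrArg Subtype.val h
    apply hWne
    rw [eq_bot_iff]
    intro x hx
    have : (x : G → ℂ) = W.subtype ⟨x, hx⟩ := rfl
    rw [hsub] at this
    simpa using this
  have hfr := finrank_homGI_le_one hirr hu hv hmf hW hWne hWirr
  haveI : FiniteDimensional ℂ (↥W →ₗ[ℂ] (G → ℂ)) := by infer_instance
  haveI : FiniteDimensional ℂ ↥M := by infer_instance
  obtain ⟨c, hc⟩ := exists_smul_of_finrank_le_one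
    (finrank_homGI_le_one hirr hu hv hmf hW hWne hWirr) hIne (y := (⟨A, hAmem⟩ : ↥M))
  refine ⟨c, fun w => ?_⟩
  have hval : A = c • W.subtype := congrArg Subtype.val hc
  have := LinearMap.congr_fun hval w
  simpa using this

end Dev6
section Dev7

variable {K : Subgroup G} {θ : ↥K →* (V ≃ₗ[ℂ] V)} {v : V}

/-- `W` is an irreducible invariant subspace of `I(G,K,ψ)`. -/
def IsIrredI (K : Subgroup G) (θ : ↥K →* (V ≃ₗ[ℂ] V)) (v : V)
    (W : Submodule ℂ (G → ℂ)) : Prop :=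
  W ≤ ISub K θ v ∧ IsInvariantSub W ∧ W ≠ ⊥ ∧
    ∀ q : Submodule ℂ (G → ℂ), q ≤ W → IsInvariantSub q → q = ⊥ ∨ q = W

/-- The projection of `ψ` onto an invariant subspace. -/
def tW (K : Subgroup G) (θ : ↥K →* (V ≃ₗ[ℂ] V)) (v : V) (W : Submodule ℂ (G → ℂ)) :
    G → ℂ := EWl W (psi K θ v)

/-- The candidate spherical function attached to `W`. -/
def sph (K : Subgroup G) (θ : ↥K →* (V ≃ₗ[ℂ] V)) (v : V) (W : Submodule ℂ (G → ℂ)) :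
    G → ℂ := (tW K θ v W 1)⁻¹ • tW K θ v W

theorem convC_left_mem {W : Submodule ℂ (G → ℂ)} (hWinv : IsInvariantSub W) (a : G → ℂ)
    {f : G → ℂ} (hf : f ∈ W) : convC a f ∈ W := by
  rw [convC_eq_sum_translate]
  exact Submodule.sum_mem _ fun g _ => Submodule.smul_mem _ _ (hWinv g f hf)

theorem tW_mem {W : Submodule ℂ (G → ℂ)} : tW K θ v W ∈ W := EWl_mem W _

theorem psi_convC_tW (hirr : IsIrreducibleRep θ) (hu : IsUnitaryRep θ) (hv : ‖v‖ = 1)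
    {W : Submodule ℂ (G → ℂ)} (hW : IsIrredI K θ v W) :
    convC (psi K θ v) (tW K θ v W) = tW K θ v W := by
  have key : EWl W (psi K θ v) = convC (psi K θ v) (EWl W (psi K θ v)) := by
    refine EWl_unique W (convC_left_mem hW.2.1 _ (EWl_mem W _)) ?_
    intro u hu'
    have h1 : psi K θ v - convC (psi K θ v) (EWl W (psi K θ v))
        = convC (psi K θ v) (psi K θ v - EWl W (psi K θ v)) := by
      rw [convC_sub_right, psi_idem hirr hu hv]
    rw [h1, innerC_convC_left, starC_psi hu]
    exact EWl_orth W (psi K θ v) _ (convC_left_mem hW.2.1 _ hu')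
  exact key.symm

theorem tW_mem_ISub {W : Submodule ℂ (G → ℂ)} (hW : IsIrredI K θ v W) :
    tW K θ v W ∈ ISub K θ v := hW.1 tW_mem

theorem tW_mem_HSet (hirr : IsIrreducibleRep θ) (hu : IsUnitaryRep θ) (hv : ‖v‖ = 1)
    {W : Submodule ℂ (G → ℂ)} (hW : IsIrredI K θ v W) : tW K θ v W ∈ HSet K θ v :=
  mem_HSet_of (psi_convC_tW hirr hu hv hW) (mem_ISub_iff.mp (tW_mem_ISub hW))

theorem tW_ne_zero (hirr : IsIrreducibleRep θ) (hu : IsUnitaryRep θ) (hv : ‖v‖ = 1)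
    {W : Submodule ℂ (G → ℂ)} (hW : IsIrredI K θ v W) : tW K θ v W ≠ 0 := by
  intro h0
  apply hW.2.2.1
  rw [eq_bot_iff]
  intro w hw
  have h1 : ∀ u ∈ W, innerC (psi K θ v) u = 0 := by
    intro u hu'
    have h := EWl_orth W (psi K θ v) u hu'
    rw [show EWl W (psi K θ v) = tW K θ v W from rfl, h0, sub_zero] at h
    exact h
  have h2 : ∀ g : G, ∀ u ∈ W, innerC (translate g (psi K θ v)) u = 0 := by
    intro g u hu'
    rw [innerC_translate_left]
    exact h1 _ (hW.2.1 g⁻¹ u hu')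
  have h3 : ∀ f ∈ ISub K θ v, ∀ u ∈ W, innerC f u = 0 := by
    intro f hf u hu'
    rw [ISub_eq_sum hf, innerC_sum_left]
    refine Finset.sum_eq_zero fun g _ => ?_
    rw [innerC_smul_left, h2 g u hu', mul_zero]
  have h4 : innerC w w = 0 := h3 w (hW.1 hw) w hw
  rw [Submodule.mem_bot]
  exact innerC_self_eq_zero.mp h4

theorem tW_one (hirr : IsIrreducibleRep θ) (hu : IsUnitaryRep θ) (hv : ‖v‖ = 1)
    {W : Submodule ℂ (G → ℂ)} (hW : IsIrredI K θ v W) :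
    tW K θ v W 1 = innerC (tW K θ v W) (tW K θ v W) := by
  have h1 : tW K θ v W 1 = innerC (tW K θ v W) (psi K θ v) := by
    have hI : convC (tW K θ v W) (psi K θ v) = tW K θ v W :=
      mem_ISub_iff.mp (tW_mem_ISub hW)
    calc tW K θ v W 1 = convC (tW K θ v W) (psi K θ v) 1 := by rw [hI]
      _ = convC (tW K θ v W) (starC (psi K θ v)) 1 := by rw [starC_psi hu]
      _ = innerC (tW K θ v W) (psi K θ v) := convC_starC_one _ _
  rw [h1]
  calc innerC (tW K θ v W) (psi K θ v)
      = innerC (EWl W (tW K θ v W)) (psi K θ v) := by rw [EWl_of_mem W tW_mem]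
    _ = innerC (tW K θ v W) (EWl W (psi K θ v)) := EWl_selfadj W _ _
    _ = innerC (tW K θ v W) (tW K θ v W) := rfl

theorem tW_one_ne_zero (hirr : IsIrreducibleRep θ) (hu : IsUnitaryRep θ) (hv : ‖v‖ = 1)
    {W : Submodule ℂ (G → ℂ)} (hW : IsIrredI K θ v W) : tW K θ v W 1 ≠ 0 := by
  rw [tW_one hirr hu hv hW]
  intro h
  exact tW_ne_zero hirr hu hv hW (innerC_self_eq_zero.mp h)

theorem EWl_eq_convC (hirr : IsIrreducibleRep θ) (hu : IsUnitaryRep θ) (hv : ‖v‖ = 1)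
    {W : Submodule ℂ (G → ℂ)} (hW : IsIrredI K θ v W) {f : G → ℂ}
    (hf : f ∈ ISub K θ v) : EWl W f = convC f (tW K θ v W) := by
  conv_lhs => rw [ISub_eq_sum hf]
  rw [map_sum, convC_eq_sum_translate]
  refine Finset.sum_congr rfl fun g _ => ?_
  rw [map_smul, EWl_translate hW.2.1 g]
  rfl

theorem conv_scalar (hirr : IsIrreducibleRep θ) (hu : IsUnitaryRep θ) (hv : ‖v‖ = 1)
    (hmf : IsMultFree K θ) {W : Submodule ℂ (G → ℂ)} (hW : IsIrredI K θ v W)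
    {f : G → ℂ} (hf : f ∈ HSet K θ v) :
    ∃ c : ℂ, ∀ w ∈ W, convC w f = c • w := by
  let A : ↥W →ₗ[ℂ] (G → ℂ) :=
    { toFun := fun w => convC ↑w f
      map_add' := fun a b => by
        show convC (↑a + ↑b) f = _
        rw [convC_add_left]
      map_smul' := fun c a => by
        show convC (c • (a : G → ℂ)) f = _
        rw [convC_smul_left]
        rfl }
  obtain ⟨c, hc⟩ := hom_scalar hirr hu hv hmf hW.1 hW.2.1 hW.2.2.1 hW.2.2.2 A
    (fun w => convC_mem_ISub (HSet_subset_ISub hirr hu hv hf))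
    (fun g w => translate_convC g _ f)
  exact ⟨c, fun w hw => hc ⟨w, hw⟩⟩

theorem EWl_scalar (hirr : IsIrreducibleRep θ) (hu : IsUnitaryRep θ) (hv : ‖v‖ = 1)
    (hmf : IsMultFree K θ) {W W' : Submodule ℂ (G → ℂ)} (hW : IsIrredI K θ v W)
    (hW' : IsIrredI K θ v W') :
    ∃ c : ℂ, ∀ w ∈ W', EWl W w = c • w := by
  let A : ↥W' →ₗ[ℂ] (G → ℂ) :=
    { toFun := fun w => EWl W ↑w
      map_add' := fun a b => by
        show EWl W (↑a + ↑b) = _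
        rw [map_add]
      map_smul' := fun c a => by
        show EWl W (c • (a : G → ℂ)) = _
        rw [map_smul]
        rfl }
  obtain ⟨c, hc⟩ := hom_scalar hirr hu hv hmf hW'.1 hW'.2.1 hW'.2.2.1 hW'.2.2.2 A
    (fun w => hW.1 (EWl_mem W ↑w))
    (fun g w => EWl_translate hW.2.1 g ↑w)
  exact ⟨c, fun w hw => hc ⟨w, hw⟩⟩

theorem mem_W_HSet_eq (hirr : IsIrreducibleRep θ) (hu : IsUnitaryRep θ) (hv : ‖v‖ = 1)
    (hmf : IsMultFree K θ) {W : Submodule ℂ (G → ℂ)} (hW : IsIrredI K θ v W)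
    {h : G → ℂ} (hh1 : h ∈ W) (hh2 : h ∈ HSet K θ v) :
    ∃ γ : ℂ, h = γ • tW K θ v W := by
  obtain ⟨γ, hγ⟩ := conv_scalar hirr hu hv hmf hW hh2
  refine ⟨γ, ?_⟩
  have ht_mem : tW K θ v W ∈ W := tW_mem
  have htt : convC (tW K θ v W) (tW K θ v W) = tW K θ v W := by
    rw [← EWl_eq_convC hirr hu hv hW (tW_mem_ISub hW)]
    exact EWl_of_mem W ht_mem
  set u : G → ℂ := h - γ • tW K θ v W with hu_def
  have hu_mem : u ∈ W := W.sub_mem hh1 (W.smul_mem _ ht_mem)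
  have hu_H : u ∈ HSet K θ v :=
    (heckeSub K θ v).sub_mem hh2
      ((heckeSub K θ v).smul_mem _ (tW_mem_HSet hirr hu hv hW))
  have htu : convC (tW K θ v W) u = 0 := by
    rw [hu_def, convC_sub_right, hγ _ ht_mem, convC_smul_right, htt, sub_self]
  obtain ⟨γu, hγu⟩ := conv_scalar hirr hu hv hmf hW hu_H
  have hγu0 : γu = 0 := by
    have h2 := hγu _ ht_mem
    rw [htu] at h2
    by_contra hne
    exact tW_ne_zero hirr hu hv hW ((smul_eq_zero.mp h2.symm).resolve_left hne)
  have hwu : ∀ w ∈ W, convC w u = 0 := fun w hw => by rw [hγu w hw, hγu0, zero_smul]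
  have huu : convC u u = 0 := hwu u hu_mem
  obtain ⟨cs, hcs⟩ := conv_scalar hirr hu hv hmf hW (starC_mem_HSet hirr hu hv hu_H)
  have h_us : convC u (starC u) = cs • u := hcs u hu_mem
  have hu0 : u = 0 := by
    by_cases hcase : u = 0
    · exact hcase
    exfalso
    have hne : innerC u u ≠ 0 := fun hz => hcase (innerC_self_eq_zero.mp hz)
    have hinner : innerC (convC u (starC u)) u = cs * innerC u u := by
      rw [h_us, innerC_smul_left]
    have hzero : innerC (convC u (starC u)) u = 0 := by
      rw [innerC_convC_right, starC_starC, huu, innerC_zero_right]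
    have hcs0 : cs = 0 := by
      have hm : cs * innerC u u = 0 := hinner.symm.trans hzero
      exact (mul_eq_zero.mp hm).resolve_right hne
    rw [hcs0, zero_smul] at h_us
    have hone := congrFun h_us 1
    rw [convC_starC_one] at hone
    exact hne (by simpa using hone)
  have hfin : h - γ • tW K θ v W = 0 := hu_def ▸ hu0
  exact sub_eq_zero.mp hfin

theorem sph_one (hirr : IsIrreducibleRep θ) (hu : IsUnitaryRep θ) (hv : ‖v‖ = 1)
    {W : Submodule ℂ (G → ℂ)} (hW : IsIrredI K θ v W) : sph K θ v W 1 = 1 := by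
  show (tW K θ v W 1)⁻¹ * tW K θ v W 1 = 1
  exact inv_mul_cancel₀ (tW_one_ne_zero hirr hu hv hW)

theorem sph_spherical (hirr : IsIrreducibleRep θ) (hu : IsUnitaryRep θ) (hv : ‖v‖ = 1)
    (hmf : IsMultFree K θ) {W : Submodule ℂ (G → ℂ)} (hW : IsIrredI K θ v W) :
    IsSpherical K θ v (sph K θ v W) := by
  refine ⟨?_, sph_one hirr hu hv hW, ?_⟩
  · exact (heckeSub K θ v).smul_mem _ (tW_mem_HSet hirr hu hv hW)
  · intro f hf
    obtain ⟨c, hc⟩ := conv_scalar hirr hu hv hmf hW hf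
    refine ⟨c, ?_⟩
    show convC ((tW K θ v W 1)⁻¹ • tW K θ v W) f = _
    rw [convC_smul_left, hc _ tW_mem, smul_comm]
    rfl

theorem sphSpan_le {φ : G → ℂ} {W : Submodule ℂ (G → ℂ)} (hWinv : IsInvariantSub W)
    (hφ : φ ∈ W) : sphSpan φ ≤ W := by
  rw [sphSpan, Submodule.span_le]
  rintro x ⟨g, rfl⟩
  exact hWinv g φ hφ

theorem mem_sphSpan_self (φ : G → ℂ) : φ ∈ sphSpan φ :=
  Submodule.subset_span ⟨1, translate_one' φ⟩

theorem sphSpan_sph (hirr : IsIrreducibleRep θ) (hu : IsUnitaryRep θ) (hv : ‖v‖ = 1)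
    (hmf : IsMultFree K θ) {W : Submodule ℂ (G → ℂ)} (hW : IsIrredI K θ v W) :
    sphSpan (sph K θ v W) = W := by
  have hle : sphSpan (sph K θ v W) ≤ W :=
    sphSpan_le hW.2.1 (W.smul_mem _ tW_mem)
  rcases hW.2.2.2 _ hle (sphSpan_invariant _) with h | h
  · exfalso
    have hmem := mem_sphSpan_self (sph K θ v W)
    rw [h] at hmem
    have h0 : sph K θ v W = 0 := by simpa using hmem
    have h1 := sph_one hirr hu hv hW
    rw [h0] at h1
    simpa using h1
  · exact h

theorem spherical_main (hirr : IsIrreducibleRep θ) (hu : IsUnitaryRep θ) (hv : ‖v‖ = 1)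
    (hmf : IsMultFree K θ) {φ : G → ℂ} (hφ : IsSpherical K θ v φ) :
    IsIrredI K θ v (sphSpan φ) ∧ φ = sph K θ v (sphSpan φ) := by
  obtain ⟨hφH, hφ1, hφE⟩ := hφ
  have hφI : φ ∈ ISub K θ v := HSet_subset_ISub hirr hu hv hφH
  have hUle : sphSpan φ ≤ ISub K θ v := by
    rw [sphSpan, Submodule.span_le]
    rintro x ⟨g, rfl⟩
    exact ISub_invariant g φ hφI
  have hφne : φ ≠ 0 := fun h => by rw [h] at hφ1; simpa using hφ1
  have hUne : sphSpan φ ≠ ⊥ := by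
    intro h
    have hm := mem_sphSpan_self φ
    rw [h] at hm
    exact hφne (by simpa using hm)
  obtain ⟨W, hWle, hWinv, hWne, hWirr⟩ := exists_irred _ (sphSpan_invariant φ) hUne
  have hW : IsIrredI K θ v W := ⟨hWle.trans hUle, hWinv, hWne, hWirr⟩
  obtain ⟨c, hc⟩ := hφE (tW K θ v W) (tW_mem_HSet hirr hu hv hW)
  have hEφ : EWl W φ = c • φ := by
    rw [EWl_eq_convC hirr hu hv hW hφI]
    exact hc
  have hc01 : c = 0 ∨ c = 1 := by
    have h2 : EWl W (EWl W φ) = EWl W φ := EWl_of_mem W (EWl_mem W φ)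
    rw [hEφ, map_smul, hEφ, smul_smul] at h2
    have hcc : c * c = c := by
      by_contra hne
      have hdiff : (c * c - c) • φ = 0 := by
        rw [sub_smul, h2, sub_self]
      rcases smul_eq_zero.mp hdiff with h | h
      · exact hne (by linear_combination h)
      · exact hφne h
    rcases mul_eq_zero.mp (by linear_combination hcc : c * (c - 1) = 0) with h | h
    · exact Or.inl h
    · exact Or.inr (by linear_combination h)
  rcases hc01 with h0 | h1
  · exfalso
    have hEφ0 : EWl W φ = 0 := by rw [hEφ, h0, zero_smul]
    have horth : ∀ u ∈ W, innerC φ u = 0 := by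
      intro u hu'
      have h := EWl_orth W φ u hu'
      rwa [hEφ0, sub_zero] at h
    have hle2 : sphSpan φ ≤ ocS W := by
      rw [sphSpan, Submodule.span_le]
      rintro x ⟨g, rfl⟩
      intro u hu'
      rw [innerC_translate_left]
      exact horth _ (hWinv g⁻¹ u hu')
    obtain ⟨w0, hw0, hw0ne⟩ := (Submodule.ne_bot_iff W).mp hWne
    have hz := hle2 (hWle hw0) w0 hw0
    exact hw0ne (innerC_self_eq_zero.mp hz)
  · have hφW : φ ∈ W := by
      have : EWl W φ = φ := by rw [hEφ, h1, one_smul]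
      rw [← this]
      exact EWl_mem W φ
    have hUW : sphSpan φ = W := le_antisymm (sphSpan_le hWinv hφW) hWle
    obtain ⟨γ, hγ⟩ := mem_W_HSet_eq hirr hu hv hmf hW hφW hφH
    have hγval : γ * tW K θ v W 1 = 1 := by
      have := congrFun hγ 1
      rw [hφ1] at this
      exact this.symm
    have hφsph : φ = sph K θ v W := by
      have hγeq : γ = (tW K θ v W 1)⁻¹ :=
        eq_inv_of_mul_eq_one_left hγval
      rw [hγ, hγeq]
      rfl
    rw [hUW]
    exact ⟨hW, hφsph⟩

theorem orth_main (hirr : IsIrreducibleRep θ) (hu : IsUnitaryRep θ) (hv : ‖v‖ = 1)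
    (hmf : IsMultFree K θ) {W W' : Submodule ℂ (G → ℂ)} (hW : IsIrredI K θ v W)
    (hW' : IsIrredI K θ v W') (hne : W ≠ W') :
    ∀ f ∈ W, ∀ f' ∈ W', innerC f f' = 0 := by
  obtain ⟨c, hc⟩ := EWl_scalar hirr hu hv hmf hW hW'
  have hc0 : c = 0 := by
    by_contra hcne
    have hle : W' ≤ W := by
      intro x hx
      have hx2 : x = c⁻¹ • EWl W x := by
        rw [hc x hx, smul_smul, inv_mul_cancel₀ hcne, one_smul]
      rw [hx2]
      exact W.smul_mem _ (EWl_mem W x)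
    rcases hW.2.2.2 W' hle hW'.2.1 with h | h
    · exact hW'.2.2.1 h
    · exact hne h.symm
  intro f hf f' hf'
  have h1 : EWl W f' = 0 := by rw [hc f' hf', hc0, zero_smul]
  have h2 : innerC f' f = 0 := by
    have h := EWl_orth W f' f hf
    rwa [h1, sub_zero] at h
  rw [innerC_conj_symm, h2, map_zero]

end Dev7
section Dev8

variable {K : Subgroup G} {θ : ↥K →* (V ≃ₗ[ℂ] V)} {v : V}

theorem decomp_main (hirr : IsIrreducibleRep θ) (hu : IsUnitaryRep θ) (hv : ‖v‖ = 1)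
    (hmf : IsMultFree K θ) :
    ISub K θ v = ⨆ φ : {φ : G → ℂ // IsSpherical K θ v φ}, sphSpan (φ : G → ℂ) := by
  set R := ⨆ φ : {φ : G → ℂ // IsSpherical K θ v φ}, sphSpan (φ : G → ℂ) with hR
  have hRle : R ≤ ISub K θ v := by
    rw [hR]
    exact iSup_le fun φ => (spherical_main hirr hu hv hmf φ.2).1.1
  have hRinv : IsInvariantSub R := iSup_invariant _ fun φ => sphSpan_invariant _
  refine le_antisymm ?_ hRle
  have hCinv : IsInvariantSub (ISub K θ v ⊓ ocS R) :=
    inf_invariant ISub_invariant (ocS_invariant hRinv)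
  have hC : ISub K θ v ⊓ ocS R = ⊥ := by
    by_contra hne
    obtain ⟨W', hW'le, hW'inv, hW'ne, hW'irr⟩ := exists_irred _ hCinv hne
    have hW' : IsIrredI K θ v W' := ⟨hW'le.trans inf_le_left, hW'inv, hW'ne, hW'irr⟩
    have hsphW' : IsSpherical K θ v (sph K θ v W') := sph_spherical hirr hu hv hmf hW'
    have hW'R : W' ≤ R := by
      rw [hR]
      calc W' = sphSpan (sph K θ v W') := (sphSpan_sph hirr hu hv hmf hW').symm
        _ ≤ _ := le_iSup (fun φ : {φ : G → ℂ // IsSpherical K θ v φ} =>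
            sphSpan (φ : G → ℂ)) ⟨_, hsphW'⟩
    obtain ⟨w0, hw0, hw0ne⟩ := (Submodule.ne_bot_iff W').mp hW'ne
    have h1 : w0 ∈ ocS R := (hW'le hw0).2
    exact hw0ne (innerC_self_eq_zero.mp (h1 w0 (hW'R hw0)))
  intro f hf
  have h2 : f - EWl R f ∈ ISub K θ v ⊓ ocS R := by
    constructor
    · exact (ISub K θ v).sub_mem hf (hRle (EWl_mem R f))
    · intro u hu'
      exact EWl_orth R f u hu'
  rw [hC] at h2
  have h3 : f = EWl R f := (sub_eq_zero.mp (Submodule.mem_bot ℂ |>.mp h2))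
  rw [h3]
  exact EWl_mem R f

theorem map_PhiL_le_ISub (hirr : IsIrreducibleRep θ) (hu : IsUnitaryRep θ) (hv : ‖v‖ = 1)
    {p : Submodule ℂ (G → V)} (hp : p ≤ ind K θ) :
    Submodule.map (PhiL v) p ≤ ISub K θ v := by
  rintro x ⟨z, hz, rfl⟩
  exact PhiL_mem_ISub hirr hu hv (hp hz)

theorem map_PsiL_le_ind {W : Submodule ℂ (G → ℂ)} :
    Submodule.map (PsiL K θ v) W ≤ ind K θ := by
  rintro x ⟨z, _, rfl⟩
  exact PsiL_mem_ind z

theorem map_PsiL_PhiL (hirr : IsIrreducibleRep θ) (hu : IsUnitaryRep θ) (hv : ‖v‖ = 1)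
    {p : Submodule ℂ (G → V)} (hp : p ≤ ind K θ) :
    Submodule.map (PsiL K θ v) (Submodule.map (PhiL v) p) = p := by
  have hC := cardDivFinrank_ne_zero (K := K) hirr
  apply le_antisymm
  · rintro x ⟨y, ⟨z, hz, rfl⟩, rfl⟩
    rw [PsiL_PhiL hirr hu hv (hp hz)]
    exact p.smul_mem _ hz
  · intro x hx
    refine ⟨PhiL v (((Nat.card ↥K : ℂ) / (Module.finrank ℂ V : ℂ))⁻¹ • x),
      ⟨_, p.smul_mem _ hx, rfl⟩, ?_⟩
    rw [map_smul, map_smul, PsiL_PhiL hirr hu hv (hp hx), smul_smul,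
      inv_mul_cancel₀ hC, one_smul]

theorem map_PhiL_PsiL (hirr : IsIrreducibleRep θ) (hu : IsUnitaryRep θ) (hv : ‖v‖ = 1)
    {W : Submodule ℂ (G → ℂ)} (hW : W ≤ ISub K θ v) :
    Submodule.map (PhiL v) (Submodule.map (PsiL K θ v) W) = W := by
  have hC := cardDivFinrank_ne_zero (K := K) hirr
  have key : ∀ f ∈ ISub K θ v, PhiL v (PsiL K θ v f)
      = ((Nat.card ↥K : ℂ) / (Module.finrank ℂ V : ℂ)) • f := by
    intro f hf
    rw [PhiL_PsiL hirr hu, mem_ISub_iff.mp hf]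
  apply le_antisymm
  · rintro x ⟨y, ⟨z, hz, rfl⟩, rfl⟩
    rw [key z (hW hz)]
    exact W.smul_mem _ hz
  · intro x hx
    refine ⟨PsiL K θ v (((Nat.card ↥K : ℂ) / (Module.finrank ℂ V : ℂ))⁻¹ • x),
      ⟨_, W.smul_mem _ hx, rfl⟩, ?_⟩
    rw [map_smul, map_smul, key x (hW hx), smul_smul, inv_mul_cancel₀ hC, one_smul]

theorem map_invariant_PhiL {p : Submodule ℂ (G → V)} (hp : IsInvariantSub p) :
    IsInvariantSub (Submodule.map (PhiL v) p) := by
  rintro h f ⟨z, hz, rfl⟩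
  exact ⟨translate h z, hp h z hz, PhiL_translate h z⟩

theorem map_invariant_PsiL {W : Submodule ℂ (G → ℂ)} (hW : IsInvariantSub W) :
    IsInvariantSub (Submodule.map (PsiL K θ v) W) := by
  rintro h f ⟨z, hz, rfl⟩
  exact ⟨translate h z, hW h z hz, PsiL_translate h z⟩

theorem toInd_irred (hirr : IsIrreducibleRep θ) (hu : IsUnitaryRep θ) (hv : ‖v‖ = 1)
    {W : Submodule ℂ (G → ℂ)} (hW : IsIrredI K θ v W) :
    IsIrredSubOfInd K θ (Submodule.map (PsiL K θ v) W) := by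
  obtain ⟨hWle, hWinv, hWne, hWirr⟩ := hW
  refine ⟨map_PsiL_le_ind, map_invariant_PsiL hWinv, ?_, ?_⟩
  · intro h
    apply hWne
    have := congrArg (Submodule.map (PhiL v)) h
    rwa [map_PhiL_PsiL hirr hu hv hWle, Submodule.map_bot] at this
  · intro q hqle hqinv
    have hqind : q ≤ ind K θ := hqle.trans map_PsiL_le_ind
    have h1 : Submodule.map (PhiL v) q ≤ W := by
      have := Submodule.map_mono (f := PhiL v) hqle
      rwa [map_PhiL_PsiL hirr hu hv hWle] at this
    have hqrec : Submodule.map (PsiL K θ v) (Submodule.map (PhiL v) q) = q :=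
      map_PsiL_PhiL hirr hu hv hqind
    rcases hWirr _ h1 (map_invariant_PhiL hqinv) with h | h
    · left
      rw [← hqrec, h, Submodule.map_bot]
    · right
      rw [← hqrec, h]

theorem toI_irred (hirr : IsIrreducibleRep θ) (hu : IsUnitaryRep θ) (hv : ‖v‖ = 1)
    {p : Submodule ℂ (G → V)} (hp : IsIrredSubOfInd K θ p) :
    IsIrredI K θ v (Submodule.map (PhiL v) p) := by
  obtain ⟨hple, hpinv, hpne, hpirr⟩ := hp
  refine ⟨map_PhiL_le_ISub hirr hu hv hple, map_invariant_PhiL hpinv, ?_, ?_⟩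
  · intro h
    apply hpne
    have := congrArg (Submodule.map (PsiL K θ v)) h
    rwa [map_PsiL_PhiL hirr hu hv hple, Submodule.map_bot] at this
  · intro q hqle hqinv
    have hqI : q ≤ ISub K θ v := hqle.trans (map_PhiL_le_ISub hirr hu hv hple)
    have h1 : Submodule.map (PsiL K θ v) q ≤ p := by
      have := Submodule.map_mono (f := PsiL K θ v) hqle
      rwa [map_PsiL_PhiL hirr hu hv hple] at this
    have hqrec : Submodule.map (PhiL v) (Submodule.map (PsiL K θ v) q) = q :=
      map_PhiL_PsiL hirr hu hv hqI
    rcases hpirr _ h1 (map_invariant_PsiL hqinv) with h | h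
    · left
      rw [← hqrec, h, Submodule.map_bot]
    · right
      rw [← hqrec, h]

theorem card_main (hirr : IsIrreducibleRep θ) (hu : IsUnitaryRep θ) (hv : ‖v‖ = 1)
    (hmf : IsMultFree K θ) :
    Nat.card {φ : G → ℂ // IsSpherical K θ v φ}
      = Nat.card {p : Submodule ℂ (G → V) // IsIrredSubOfInd K θ p} := by
  have e1 : {φ : G → ℂ // IsSpherical K θ v φ}
      ≃ {W : Submodule ℂ (G → ℂ) // IsIrredI K θ v W} :=
    { toFun := fun φ => ⟨sphSpan (φ : G → ℂ), (spherical_main hirr hu hv hmf φ.2).1⟩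
      invFun := fun W => ⟨sph K θ v W, sph_spherical hirr hu hv hmf W.2⟩
      left_inv := fun φ => Subtype.ext (by
        have := (spherical_main hirr hu hv hmf φ.2).2
        exact this.symm)
      right_inv := fun W => Subtype.ext (by
        exact sphSpan_sph hirr hu hv hmf W.2) }
  have e2 : {W : Submodule ℂ (G → ℂ) // IsIrredI K θ v W}
      ≃ {p : Submodule ℂ (G → V) // IsIrredSubOfInd K θ p} :=
    { toFun := fun W => ⟨Submodule.map (PsiL K θ v) W, toInd_irred hirr hu hv W.2⟩
      invFun := fun p => ⟨Submodule.map (PhiL v) p, toI_irred hirr hu hv p.2⟩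
      left_inv := fun W => Subtype.ext (map_PhiL_PsiL hirr hu hv W.2.1)
      right_inv := fun p => Subtype.ext (map_PsiL_PhiL hirr hu hv p.2.1) }
  exact Nat.card_congr (e1.trans e2)

end Dev8
/-- Let `(G,K,θ)` be a multiplicity-free triple.  For every spherical
function `φ`, the span `U_φ` of the `G`-translates of `φ` is an irreducible `G`-invariant
subspace of `L(G)`, the subspaces `U_φ` for distinct spherical functions are mutually
orthogonal, and `I(G,K,ψ) = ⊕_φ U_φ` is the decomposition of `I(G,K,ψ)` into irreducible
subrepresentations.  In particular the number of spherical functions equals the number of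
pairwise inequivalent irreducible `G`-representations contained in `Ind_K^G θ` (equivalently,
the number of irreducible `G`-invariant subspaces of `Ind_K^G V`). -/
theorem statement9 (K : Subgroup G) (θ : ↥K →* (V ≃ₗ[ℂ] V))
    (hu : IsUnitaryRep θ) (hirr : IsIrreducibleRep θ) (v : V) (hv : ‖v‖ = 1)
    (hmf : IsMultFree K θ) :
    -- each U_φ is an irreducible invariant subspace of I(G,K,ψ)
    (∀ φ : G → ℂ, IsSpherical K θ v φ →
      sphSpan φ ≤ ISub K θ v ∧ IsInvariantSub (sphSpan φ) ∧ sphSpan φ ≠ ⊥ ∧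
        (∀ q : Submodule ℂ (G → ℂ), q ≤ sphSpan φ → IsInvariantSub q →
          q = ⊥ ∨ q = sphSpan φ)) ∧
    -- the U_φ are mutually orthogonal
    (∀ φ μ : G → ℂ, IsSpherical K θ v φ → IsSpherical K θ v μ → φ ≠ μ →
      ∀ f ∈ sphSpan φ, ∀ f' ∈ sphSpan μ, innerC f f' = 0) ∧
    -- I(G,K,ψ) is the (orthogonal) direct sum of the U_φ
    (ISub K θ v = ⨆ φ : {φ : G → ℂ // IsSpherical K θ v φ}, sphSpan (φ : G → ℂ)) ∧
    -- the number of spherical functions equals |J|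
    Nat.card {φ : G → ℂ // IsSpherical K θ v φ} =
      Nat.card {p : Submodule ℂ (G → V) // IsIrredSubOfInd K θ p} := by
  refine ⟨?_, ?_, ?_, ?_⟩
  · intro φ hφ
    exact (spherical_main hirr hu hv hmf hφ).1
  · intro φ μ hφ hμ hneq f hf f' hf'
    have h1 := spherical_main hirr hu hv hmf hφ
    have h2 := spherical_main hirr hu hv hmf hμ
    have hWne : sphSpan φ ≠ sphSpan μ := by
      intro h
      apply hneq
      rw [h1.2, h2.2, h]
    exact orth_main hirr hu hv hmf h1.1 h2.1 hWne f hf f' hf'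
  · exact decomp_main hirr hu hv hmf
  · exact card_main hirr hu hv hmf

end MFT
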